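/- arXiv:1809.04587 — 2 statements merged into one kernel-verified Lean document; each statement's English description precedes it below -/
import Mathlib

section
/- Let X_1, X_2, ... be i.i.d. real random variables with E[X_1] = μ > 0 and finite second moment. Define N̂ = sup{ n : X_1 + ... + X_n ≤ 0 } (with N̂ = 0 if the set is empty). Then N̂ is almost surely finite and E[N̂] < ∞. -/
open MeasureTheory ProbabilityTheory Filter Finset
open scoped ENNReal NNReal


lemma exp_le_one_add_sq {u : ℝ} (hu : u ≤ 1) : Real.exp u ≤ 1 + u + u ^ 2 := by
  rcases le_or_gt u (-1) with h | h
  · have h1 : Real.exp u ≤ 1 := Real.exp_le_one_iff.mpr (by linarith)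
    nlinarith
  · have habs : |u| ≤ 1 := abs_le.mpr ⟨h.le, hu⟩
    have hb := Real.exp_bound habs (by norm_num : (0:ℕ) < 3)
    have hsum : ∑ i ∈ Finset.range 3, u ^ i / (Nat.factorial i : ℝ) = 1 + u + u ^ 2 / 2 := by
      simp [Finset.sum_range_succ, Nat.factorial]
    rw [hsum] at hb
    norm_num [Nat.factorial] at hb
    have h3 : |u| ^ 3 ≤ u ^ 2 := by
      have e : |u| ^ 3 = |u| * u ^ 2 := by
        rw [show (3:ℕ) = 2 + 1 from rfl, pow_succ, sq_abs]; ring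
      rw [e]
      nlinarith [abs_nonneg u, sq_nonneg u, habs]
    have h2 := (abs_le.mp hb).2
    nlinarith

lemma pow_six_le_exp {x : ℝ} (hx : 0 ≤ x) : x ^ 6 ≤ 46656 * Real.exp x := by
  have h1 : x / 6 ≤ Real.exp (x / 6) := by linarith [Real.add_one_le_exp (x / 6)]
  have h2 : (x / 6) ^ 6 ≤ Real.exp (x / 6) ^ 6 :=
    pow_le_pow_left₀ (by positivity) h1 6
  have h3 : Real.exp (x / 6) ^ 6 = Real.exp x := by
    rw [← Real.exp_nat_mul]; norm_num; ring_nf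
  nlinarith [h2, h3]


lemma chernoff_bound {Ω : Type*} [MeasureSpace Ω] [IsProbabilityMeasure (ℙ : Measure Ω)]
    (X : ℕ → Ω → ℝ) (hmeas : ∀ i, Measurable (X i))
    (hindep : iIndepFun X ℙ)
    (hident : ∀ i, IdentDistrib (X i) (X 0) ℙ ℙ)
    (g : ℝ → ℝ) (hg : Measurable g) (M m0 v0 t θ : ℝ)
    (hbdd : ∀ x, g x ≤ M) (hθ : 0 ≤ θ) (hθM : θ * M ≤ 1)
    (hint : Integrable (fun ω => g (X 0 ω)) ℙ)
    (hint2 : Integrable (fun ω => (g (X 0 ω)) ^ 2) ℙ)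
    (hm : ∫ ω, g (X 0 ω) ∂ℙ ≤ m0) (hv : ∫ ω, (g (X 0 ω)) ^ 2 ∂ℙ ≤ v0)
    (k : ℕ) :
    ℙ {ω | (k : ℝ) * t ≤ ∑ j ∈ Finset.range k, g (X j ω)}
      ≤ ENNReal.ofReal (Real.exp (-(θ * (t - m0 - θ * v0)) * k)) := by
  classical
  set Y : ℕ → Ω → ℝ := fun j => g ∘ X j with hY
  have hYmeas : ∀ j, Measurable (Y j) := fun j => hg.comp (hmeas j)
  have hYindep : iIndepFun Y ℙ :=
    hindep.comp (fun _ => g) (fun _ => hg)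
  have hYident : ∀ j, IdentDistrib (Y j) (Y 0) ℙ ℙ := fun j => (hident j).comp hg
  -- pointwise bound on θ * Y
  have hptwise : ∀ ω j, θ * Y j ω ≤ 1 := by
    intro ω j
    calc θ * Y j ω ≤ θ * M := mul_le_mul_of_nonneg_left (hbdd _) hθ
    _ ≤ 1 := hθM
  -- mgf of one variable
  have hmgf0 : mgf (Y 0) ℙ θ ≤ Real.exp (θ * m0 + θ ^ 2 * v0) := by
    have hintexp : Integrable (fun ω => Real.exp (θ * Y 0 ω)) ℙ := by
      refine Integrable.mono' (integrable_const (Real.exp 1))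
        (((hYmeas 0).const_mul θ).exp.aestronglyMeasurable) (ae_of_all _ fun ω => ?_)
      rw [Real.norm_eq_abs, abs_of_pos (Real.exp_pos _)]
      exact Real.exp_le_exp.mpr (hptwise ω 0)
    have hle : mgf (Y 0) ℙ θ ≤ ∫ ω, (1 + θ * Y 0 ω + (θ * Y 0 ω) ^ 2) ∂ℙ := by
      refine integral_mono hintexp ?_ fun ω => exp_le_one_add_sq (hptwise ω 0)
      have : (fun ω => 1 + θ * Y 0 ω + (θ * Y 0 ω) ^ 2)
          = fun ω => 1 + θ * Y 0 ω + θ ^ 2 * (Y 0 ω) ^ 2 := by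
        funext ω; ring
      rw [this]
      exact ((integrable_const 1).add (hint.const_mul θ)).add (hint2.const_mul (θ ^ 2))
    have heval : ∫ ω, (1 + θ * Y 0 ω + (θ * Y 0 ω) ^ 2) ∂ℙ
        = 1 + θ * (∫ ω, Y 0 ω ∂ℙ) + θ ^ 2 * (∫ ω, (Y 0 ω) ^ 2 ∂ℙ) := by
      have : (fun ω => 1 + θ * Y 0 ω + (θ * Y 0 ω) ^ 2)
          = fun ω => 1 + θ * Y 0 ω + θ ^ 2 * (Y 0 ω) ^ 2 := by
        funext ω; ring
      have hA : Integrable (fun ω => 1 + θ * Y 0 ω) ℙ := (integrable_const 1).add (hint.const_mul θ)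
      have hB : Integrable (fun ω => θ ^ 2 * (Y 0 ω) ^ 2) ℙ := hint2.const_mul (θ ^ 2)
      have hA1 : Integrable (fun _ : Ω => (1:ℝ)) ℙ := integrable_const 1
      have hA2 : Integrable (fun ω => θ * Y 0 ω) ℙ := hint.const_mul θ
      rw [this, integral_add hA hB, integral_add hA1 hA2,
        integral_const, integral_const_mul, integral_const_mul]
      simp
    have : mgf (Y 0) ℙ θ ≤ 1 + θ * m0 + θ ^ 2 * v0 := by
      rw [heval] at hle
      have h1 : θ * (∫ ω, Y 0 ω ∂ℙ) ≤ θ * m0 := mul_le_mul_of_nonneg_left hm hθ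
      have h2 : θ ^ 2 * (∫ ω, (Y 0 ω) ^ 2 ∂ℙ) ≤ θ ^ 2 * v0 :=
        mul_le_mul_of_nonneg_left hv (sq_nonneg θ)
      linarith
    calc mgf (Y 0) ℙ θ ≤ 1 + θ * m0 + θ ^ 2 * v0 := this
    _ = (θ * m0 + θ ^ 2 * v0) + 1 := by ring
    _ ≤ Real.exp (θ * m0 + θ ^ 2 * v0) := Real.add_one_le_exp _
  -- mgf of the sum
  have hmgfsum : mgf (∑ j ∈ Finset.range k, Y j) ℙ θ = (mgf (Y 0) ℙ θ) ^ k := by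
    rw [hYindep.mgf_sum hYmeas]
    have : ∀ j ∈ Finset.range k, mgf (Y j) ℙ θ = mgf (Y 0) ℙ θ := by
      intro j _
      unfold mgf
      exact ((hYident j).comp (measurable_const_mul θ).exp).integral_eq
    rw [Finset.prod_congr rfl this, Finset.prod_const, Finset.card_range]
  -- integrability of exp of the sum
  have hintsum : Integrable (fun ω => Real.exp (θ * (∑ j ∈ Finset.range k, Y j) ω)) ℙ := by
    refine Integrable.mono' (integrable_const (Real.exp (k : ℝ)))
      ?_ (ae_of_all _ fun ω => ?_)
    · refine (Measurable.exp (Measurable.const_mul ?_ θ)).aestronglyMeasurable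
      have h := Finset.measurable_sum (Finset.range k) (fun j (_ : j ∈ Finset.range k) => hYmeas j)
      rw [show (∑ j ∈ Finset.range k, Y j) = fun a => ∑ j ∈ Finset.range k, Y j a from
        funext fun a => Finset.sum_apply _ _ _]
      exact h
    · rw [Real.norm_eq_abs, abs_of_pos (Real.exp_pos _)]
      refine Real.exp_le_exp.mpr ?_
      rw [Finset.sum_apply, Finset.mul_sum]
      calc ∑ j ∈ Finset.range k, θ * Y j ω ≤ ∑ j ∈ Finset.range k, 1 :=
        Finset.sum_le_sum fun j _ => hptwise ω j
      _ = (k : ℝ) := by simp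
  have hch := measure_ge_le_exp_mul_mgf (μ := ℙ) (X := ∑ j ∈ Finset.range k, Y j)
      ((k : ℝ) * t) hθ hintsum
  have hset : {ω | (k : ℝ) * t ≤ (∑ j ∈ Finset.range k, Y j) ω}
      = {ω | (k : ℝ) * t ≤ ∑ j ∈ Finset.range k, g (X j ω)} := by
    ext ω; simp [Finset.sum_apply, hY]
  rw [hset, hmgfsum] at hch
  have hpow : (mgf (Y 0) ℙ θ) ^ k ≤ (Real.exp (θ * m0 + θ ^ 2 * v0)) ^ k :=
    pow_le_pow_left₀ mgf_nonneg hmgf0 k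
  have hfinal : (ℙ {ω | (k : ℝ) * t ≤ ∑ j ∈ Finset.range k, g (X j ω)}).toReal
      ≤ Real.exp (-(θ * (t - m0 - θ * v0)) * k) := by
    calc (ℙ _).toReal ≤ Real.exp (-θ * ((k : ℝ) * t)) * (mgf (Y 0) ℙ θ) ^ k := hch
    _ ≤ Real.exp (-θ * ((k : ℝ) * t)) * (Real.exp (θ * m0 + θ ^ 2 * v0)) ^ k := by
        exact mul_le_mul_of_nonneg_left hpow (Real.exp_pos _).le
    _ = Real.exp (-(θ * (t - m0 - θ * v0)) * k) := by
        rw [← Real.exp_nat_mul, ← Real.exp_add]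
        congr 1
        ring
  calc ℙ {ω | (k : ℝ) * t ≤ ∑ j ∈ Finset.range k, g (X j ω)}
      = ENNReal.ofReal ((ℙ {ω | (k : ℝ) * t ≤ ∑ j ∈ Finset.range k, g (X j ω)}).toReal) :=
        (ENNReal.ofReal_toReal (measure_ne_top _ _)).symm
  _ ≤ ENNReal.ofReal (Real.exp (-(θ * (t - m0 - θ * v0)) * k)) := ENNReal.ofReal_le_ofReal hfinal


lemma geom_indicator_le (c : ℝ) :
    ∑' i : ℕ, (if (32:ℝ) ^ i ≤ c then ((1024:ℝ≥0∞)) ^ i else 0) ≤ ENNReal.ofReal (2 * c ^ 2) := by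
  rw [ENNReal.tsum_eq_iSup_sum]
  refine iSup_le fun s => ?_
  classical
  set t := s.filter (fun i => (32:ℝ) ^ i ≤ c) with ht
  have hsum : ∑ i ∈ s, (if (32:ℝ) ^ i ≤ c then ((1024:ℝ≥0∞)) ^ i else 0)
      = ∑ i ∈ t, ((1024:ℝ≥0∞)) ^ i := by
    rw [ht, Finset.sum_filter]
  rw [hsum]
  rcases t.eq_empty_or_nonempty with h | h
  · simp [h]
  · set M := t.max' h with hM
    have hMc : (32:ℝ) ^ M ≤ c := by
      have h2 := Finset.mem_filter.mp (t.max'_mem h)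
      exact h2.2
    have hsub : t ⊆ Finset.range (M + 1) := by
      intro i hi
      rw [Finset.mem_range, Nat.lt_succ_iff]
      exact Finset.le_max' t i hi
    calc ∑ i ∈ t, ((1024:ℝ≥0∞)) ^ i ≤ ∑ i ∈ Finset.range (M + 1), ((1024:ℝ≥0∞)) ^ i :=
      Finset.sum_le_sum_of_subset hsub
    _ = ENNReal.ofReal (∑ i ∈ Finset.range (M + 1), (1024:ℝ) ^ i) := by
        rw [ENNReal.ofReal_sum_of_nonneg (fun i _ => by positivity)]
        refine Finset.sum_congr rfl fun i _ => ?_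
        rw [ENNReal.ofReal_pow (by norm_num : (0:ℝ) ≤ 1024)]
        norm_num
    _ ≤ ENNReal.ofReal (2 * c ^ 2) := by
        refine ENNReal.ofReal_le_ofReal ?_
        have hgeom : ∑ i ∈ Finset.range (M + 1), (1024:ℝ) ^ i
            = ((1024:ℝ) ^ (M + 1) - 1) / (1024 - 1) := geom_sum_eq (by norm_num) (M + 1)
        have hpow : ((32:ℝ) ^ M) ^ 2 = (1024:ℝ) ^ M := by
          rw [← pow_mul, pow_mul']
          norm_num
        have h32 : (0:ℝ) < 32 ^ M := by positivity
        have hc2 : (1024:ℝ) ^ M ≤ c ^ 2 := by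
          rw [← hpow]
          exact pow_le_pow_left₀ h32.le hMc 2
        rw [hgeom, pow_succ]
        nlinarith [hc2, pow_pos (show (0:ℝ) < 1024 by norm_num) M]

lemma dyadic_tail {Ω : Type*} [MeasureSpace Ω] [IsProbabilityMeasure (ℙ : Measure Ω)]
    (Z : Ω → ℝ) (hZ : Measurable Z) (ε : ℝ) (hε : 0 < ε)
    (hint2 : Integrable (fun ω => Z ω ^ 2) ℙ) :
    ∑' i : ℕ, (1024:ℝ≥0∞) ^ i * ℙ {ω | ε * 32 ^ i ≤ Z ω}
      ≤ ENNReal.ofReal (2 / ε ^ 2 * ∫ ω, Z ω ^ 2 ∂ℙ) := by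
  have hmeas_set : ∀ i : ℕ, MeasurableSet {ω | ε * 32 ^ i ≤ Z ω} := fun i =>
    measurableSet_le measurable_const hZ
  have hrw : ∀ i : ℕ, (1024:ℝ≥0∞) ^ i * ℙ {ω | ε * 32 ^ i ≤ Z ω}
      = ∫⁻ ω, ({ω | ε * 32 ^ i ≤ Z ω}).indicator (fun _ => (1024:ℝ≥0∞) ^ i) ω ∂ℙ := by
    intro i
    rw [lintegral_indicator_const (hmeas_set i)]
  calc ∑' i : ℕ, (1024:ℝ≥0∞) ^ i * ℙ {ω | ε * 32 ^ i ≤ Z ω}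
      = ∑' i : ℕ, ∫⁻ ω, ({ω | ε * 32 ^ i ≤ Z ω}).indicator (fun _ => (1024:ℝ≥0∞) ^ i) ω ∂ℙ :=
        tsum_congr hrw
    _ = ∫⁻ ω, ∑' i : ℕ, ({ω | ε * 32 ^ i ≤ Z ω}).indicator (fun _ => (1024:ℝ≥0∞) ^ i) ω ∂ℙ :=
        (lintegral_tsum fun i => ((measurable_const.indicator (hmeas_set i)).aemeasurable)).symm
    _ ≤ ∫⁻ ω, ENNReal.ofReal (2 / ε ^ 2 * Z ω ^ 2) ∂ℙ := by
        refine lintegral_mono fun ω => ?_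
        have heq : ∀ i : ℕ, ({ω | ε * 32 ^ i ≤ Z ω}).indicator (fun _ => (1024:ℝ≥0∞) ^ i) ω
            = (if (32:ℝ) ^ i ≤ Z ω / ε then ((1024:ℝ≥0∞)) ^ i else 0) := by
          intro i
          rw [Set.indicator_apply]
          refine if_congr ?_ rfl rfl
          rw [Set.mem_setOf_eq, le_div_iff₀ hε]
          constructor <;> intro h <;> linarith
        rw [tsum_congr heq]
        refine le_trans (geom_indicator_le (Z ω / ε)) (ENNReal.ofReal_le_ofReal ?_)
        rw [div_pow]
        apply le_of_eq
        field_simp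
    _ = ENNReal.ofReal (2 / ε ^ 2 * ∫ ω, Z ω ^ 2 ∂ℙ) := by
        rw [← ofReal_integral_eq_lintegral_ofReal (hint2.const_mul _)
          (ae_of_all _ fun ω => by positivity), integral_const_mul]

lemma pow_identity_P (V T0 : ℝ) (hT : 0 < T0) (i : ℕ) :
    (32:ℝ)^i * ((32:ℝ)^i * ((32:ℝ)^i * (V/((T0*16^i)^2))^2)) = (V^2/T0^4) * (1/2)^i := by
  have h1 : (((16:ℝ)^i)^2)^2 = 65536^i := by
    rw [← pow_mul, ← pow_mul, Nat.mul_comm, pow_mul]; norm_num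
  have h4 : (32:ℝ)^(i*3) * 2^i = 65536^i := by
    rw [Nat.mul_comm, pow_mul, ← mul_pow]
    norm_num
  rw [mul_pow, div_pow, mul_pow, h1, one_div, inv_pow, ← one_div, ← pow_mul]
  norm_num
  field_simp
  ring_nf
  linear_combination (V^2) * h4

set_option maxHeartbeats 1000000 in
/-- If `X 1, X 2, …` are i.i.d. real random variables with mean `μ > 0` and finite
second moment, then the last time `N̂ = sup{n : X 1 + … + X n ≤ 0}` (equal to `0` if the
set is empty) is almost surely finite and has finite expectation.
Here `N̂` is realized as an `ℝ≥0∞`-valued supremum. -/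
theorem stmt1 {Ω : Type*} [MeasureSpace Ω] [IsProbabilityMeasure (ℙ : Measure Ω)]
    (X : ℕ → Ω → ℝ) (hmeas : ∀ i, Measurable (X i))
    (hindep : iIndepFun X ℙ)
    (hident : ∀ i, IdentDistrib (X i) (X 0) ℙ ℙ)
    (μ : ℝ) (hμ : 0 < μ) (hmean : ∫ ω, X 0 ω ∂ℙ = μ)
    (hmom2 : Integrable (fun ω => (X 0 ω) ^ 2) ℙ)
    (S : ℕ → Ω → ℝ) (hS : ∀ n ω, S n ω = ∑ k ∈ Finset.range n, X k ω)
    (Nhat : Ω → ℝ≥0∞)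
    (hNhat : ∀ ω, Nhat ω = sSup {x : ℝ≥0∞ | ∃ n : ℕ, 1 ≤ n ∧ S n ω ≤ 0 ∧ x = n}) :
    (∀ᵐ ω ∂ℙ, Nhat ω < ⊤) ∧ ∫⁻ ω, Nhat ω ∂ℙ < ⊤ := by
  classical
  -- measurability of the partial sums
  have hSmeas : ∀ n, Measurable (S n) := by
    intro n
    have : S n = fun ω => ∑ k ∈ Finset.range n, X k ω := funext fun ω => hS n ω
    rw [this]
    exact Finset.measurable_sum _ fun j _ => hmeas j
  -- basic integrability
  have hX0int : Integrable (X 0) ℙ := by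
    refine Integrable.mono' ((integrable_const 1).add hmom2)
      (hmeas 0).aestronglyMeasurable (ae_of_all _ fun ω => ?_)
    rw [Real.norm_eq_abs]
    simp only [Pi.add_apply]
    nlinarith [sq_nonneg (|X 0 ω| - 1), sq_abs (X 0 ω), abs_nonneg (X 0 ω)]
  have hUint : Integrable (fun ω => μ - X 0 ω) ℙ := (integrable_const μ).sub hX0int
  have hU2int : Integrable (fun ω => (μ - X 0 ω) ^ 2) ℙ := by
    have : (fun ω => (μ - X 0 ω) ^ 2)
        = fun ω => (μ ^ 2 - (2 * μ) * X 0 ω) + X 0 ω ^ 2 := by funext ω; ring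
    rw [this]
    exact ((integrable_const (μ ^ 2)).sub (hX0int.const_mul (2 * μ))).add hmom2
  have hUmean : ∫ ω, (μ - X 0 ω) ∂ℙ = 0 := by
    rw [integral_sub (integrable_const μ) hX0int, hmean, integral_const]
    simp
  -- constants
  set v := ∫ ω, (μ - X 0 ω) ^ 2 ∂ℙ with hv_def
  have hv0 : 0 ≤ v := integral_nonneg fun ω => sq_nonneg _
  set V := v + 1 with hV_def
  have hV : 0 < V := by linarith
  have hvV : v ≤ V := by linarith
  set lam := max 1 (256 * V / μ) with hlam_def
  have hlam1 : (1:ℝ) ≤ lam := le_max_left _ _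
  have hlam0 : (0:ℝ) < lam := lt_of_lt_of_le one_pos hlam1
  have hVlam : V / lam ≤ μ / 256 := by
    rw [div_le_div_iff₀ hlam0 (by norm_num : (0:ℝ) < 256)]
    have h := le_max_right 1 (256 * V / μ)
    rw [div_le_iff₀ hμ] at h
    nlinarith
  set T0 := max 1 (512 * V / μ) with hT0_def
  have hT01 : (1:ℝ) ≤ T0 := le_max_left _ _
  have hT00 : (0:ℝ) < T0 := lt_of_lt_of_le one_pos hT01
  have hVT0 : V / T0 ≤ μ / 512 := by
    rw [div_le_div_iff₀ hT00 (by norm_num : (0:ℝ) < 512)]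
    have h := le_max_right 1 (512 * V / μ)
    rw [div_le_iff₀ hμ] at h
    nlinarith
  -- truncation functions
  set gfun : ℝ → ℝ := fun x => min (μ - x) lam with hgfun_def
  set zfun : ℝ → ℝ := fun x => max (μ - x - lam) 0 with hzfun_def
  have hgz : ∀ x, gfun x + zfun x = μ - x := by
    intro x
    rcases le_total (μ - x) lam with h | h
    · rw [hgfun_def, hzfun_def]
      simp only []
      rw [min_eq_left h, max_eq_right (by linarith)]
      ring
    · rw [hgfun_def, hzfun_def]
      simp only []
      rw [min_eq_right h, max_eq_left (by linarith)]
      ring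
  have hgmeas : Measurable gfun :=
    (measurable_const.sub measurable_id).min measurable_const
  have hzmeas : Measurable zfun :=
    ((measurable_const.sub measurable_id).sub measurable_const).max measurable_const
  have hznn : ∀ x, 0 ≤ zfun x := fun x => le_max_right _ _
  have hz_le_abs : ∀ x, zfun x ≤ |μ - x| := by
    intro x
    refine max_le ?_ (abs_nonneg _)
    calc μ - x - lam ≤ μ - x := by linarith
    _ ≤ |μ - x| := le_abs_self _
  have hz_sq_le : ∀ x, zfun x ^ 2 ≤ (μ - x) ^ 2 := by
    intro x
    have := pow_le_pow_left₀ (hznn x) (hz_le_abs x) 2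
    rwa [sq_abs] at this
  have hz_le_sq_div : ∀ x, zfun x ≤ (μ - x) ^ 2 / lam := by
    intro x
    refine max_le ?_ (by positivity)
    rw [le_div_iff₀ hlam0]
    nlinarith [sq_nonneg (μ - x - lam)]
  -- integrability of truncated pieces
  have hzint : Integrable (fun ω => zfun (X 0 ω)) ℙ := by
    refine Integrable.mono' hUint.abs ((hzmeas.comp (hmeas 0)).aestronglyMeasurable)
      (ae_of_all _ fun ω => ?_)
    rw [Real.norm_eq_abs, abs_of_nonneg (hznn _)]
    exact hz_le_abs _
  have hz2int : Integrable (fun ω => zfun (X 0 ω) ^ 2) ℙ := by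
    refine Integrable.mono' hU2int (((hzmeas.comp (hmeas 0)).pow_const 2).aestronglyMeasurable)
      (ae_of_all _ fun ω => ?_)
    rw [Real.norm_eq_abs, abs_of_nonneg (by positivity)]
    exact hz_sq_le _
  have hzmean : ∫ ω, zfun (X 0 ω) ∂ℙ ≤ μ / 256 := by
    have h1 : ∫ ω, zfun (X 0 ω) ∂ℙ ≤ ∫ ω, (μ - X 0 ω) ^ 2 / lam ∂ℙ :=
      integral_mono hzint (hU2int.div_const lam) fun ω => hz_le_sq_div _
    rw [integral_div] at h1
    calc ∫ ω, zfun (X 0 ω) ∂ℙ ≤ v / lam := h1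
    _ ≤ V / lam := by gcongr
    _ ≤ μ / 256 := hVlam
  have hz2mean : ∫ ω, zfun (X 0 ω) ^ 2 ∂ℙ ≤ V := by
    calc ∫ ω, zfun (X 0 ω) ^ 2 ∂ℙ ≤ ∫ ω, (μ - X 0 ω) ^ 2 ∂ℙ :=
      integral_mono hz2int hU2int fun ω => hz_sq_le _
    _ ≤ V := hvV
  -- g moments
  have hgint : Integrable (fun ω => gfun (X 0 ω)) ℙ := by
    refine Integrable.mono' (hUint.abs.add (integrable_const lam))
      ((hgmeas.comp (hmeas 0)).aestronglyMeasurable) (ae_of_all _ fun ω => ?_)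
    simp only [Pi.add_apply]
    rw [Real.norm_eq_abs]
    rcases min_cases (μ - X 0 ω) lam with ⟨h1, _⟩ | ⟨h1, _⟩
    · rw [hgfun_def]; simp only []; rw [h1]
      have := abs_nonneg (μ - X 0 ω)
      linarith [le_refl (|μ - X 0 ω|)]
    · rw [hgfun_def]; simp only []; rw [h1, abs_of_pos hlam0]
      linarith [abs_nonneg (μ - X 0 ω)]
  have hg2int : Integrable (fun ω => gfun (X 0 ω) ^ 2) ℙ := by
    refine Integrable.mono' (hU2int.add (integrable_const (lam ^ 2)))
      (((hgmeas.comp (hmeas 0)).pow_const 2).aestronglyMeasurable) (ae_of_all _ fun ω => ?_)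
    simp only [Pi.add_apply]
    rw [Real.norm_eq_abs, abs_of_nonneg (sq_nonneg _)]
    rcases min_cases (μ - X 0 ω) lam with ⟨h1, _⟩ | ⟨h1, _⟩
    · rw [hgfun_def]; simp only []; rw [h1]
      nlinarith [sq_nonneg lam]
    · rw [hgfun_def]; simp only []; rw [h1]
      nlinarith [sq_nonneg (μ - X 0 ω)]
  have hgmean : ∫ ω, gfun (X 0 ω) ∂ℙ ≤ 0 := by
    have h1 : ∫ ω, gfun (X 0 ω) ∂ℙ ≤ ∫ ω, (μ - X 0 ω) ∂ℙ :=
      integral_mono hgint hUint fun ω => min_le_left _ _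
    rwa [hUmean] at h1
  have hg2mean : ∫ ω, gfun (X 0 ω) ^ 2 ∂ℙ ≤ V + lam ^ 2 := by
    have h1 : ∫ ω, gfun (X 0 ω) ^ 2 ∂ℙ ≤ ∫ ω, ((μ - X 0 ω) ^ 2 + lam ^ 2) ∂ℙ := by
      refine integral_mono hg2int (hU2int.add (integrable_const (lam ^ 2))) fun ω => ?_
      rcases min_cases (μ - X 0 ω) lam with ⟨h1, _⟩ | ⟨h1, _⟩
      · rw [hgfun_def]; simp only []; rw [h1]; nlinarith [sq_nonneg lam]
      · rw [hgfun_def]; simp only []; rw [h1]; nlinarith [sq_nonneg (μ - X 0 ω)]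
    rw [integral_add hU2int (integrable_const (lam ^ 2)), integral_const] at h1
    simp only [Measure.real, measure_univ, ENNReal.toReal_one, smul_eq_mul, one_mul] at h1
    linarith
  -- events
  set GE : ℕ → Set Ω := fun k => {ω | (k:ℝ) * (μ/2) ≤ ∑ j ∈ Finset.range k, gfun (X j ω)} with hGE_def
  set ZE : ℕ → Set Ω := fun i => {ω | ((32^i : ℕ):ℝ) * (μ/64) ≤ ∑ j ∈ Finset.range (32^i), zfun (X j ω)} with hZE_def
  set A : ℕ → Set Ω := fun n => {ω | ∃ k, n + 1 ≤ k ∧ S k ω ≤ 0} with hA_def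
  have hg_le_lam : ∀ x, gfun x ≤ lam := fun x => min_le_right _ _
  clear_value v V lam T0 gfun zfun GE ZE A
  have hAmeas : ∀ n, MeasurableSet (A n) := by
    intro n
    have hh : A n = ⋃ k, ⋃ (_ : n + 1 ≤ k), {ω | S k ω ≤ 0} := by
      ext ω; simp [hA_def, Set.mem_iUnion]
    rw [hh]
    exact MeasurableSet.iUnion fun k => MeasurableSet.iUnion fun _ =>
      measurableSet_le (hSmeas k) measurable_const
  -- pointwise: Nhat ≤ sum of indicators of A n
  have hNhat_le : ∀ ω, Nhat ω ≤ ∑' n, (A n).indicator (fun _ => (1:ℝ≥0∞)) ω := by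
    intro ω
    rw [hNhat ω]
    refine sSup_le ?_
    rintro x ⟨n, hn1, hSn, rfl⟩
    have hmem : ∀ m, m < n → ω ∈ A m := by
      intro m hm
      rw [hA_def]
      exact ⟨n, by omega, hSn⟩
    calc (n : ℝ≥0∞) = ∑ m ∈ Finset.range n, 1 := by simp
    _ = ∑ m ∈ Finset.range n, (A m).indicator (fun _ => (1:ℝ≥0∞)) ω := by
        refine Finset.sum_congr rfl fun m hm => ?_
        rw [Set.indicator_of_mem (hmem m (Finset.mem_range.mp hm))]
    _ ≤ ∑' n, (A n).indicator (fun _ => (1:ℝ≥0∞)) ω := ENNReal.sum_le_tsum _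
  have hlint : ∫⁻ ω, Nhat ω ∂ℙ ≤ ∑' n, ℙ (A n) := by
    calc ∫⁻ ω, Nhat ω ∂ℙ ≤ ∫⁻ ω, ∑' n, (A n).indicator (fun _ => (1:ℝ≥0∞)) ω ∂ℙ :=
      lintegral_mono hNhat_le
    _ = ∑' n, ∫⁻ ω, (A n).indicator (fun _ => (1:ℝ≥0∞)) ω ∂ℙ :=
      lintegral_tsum fun n => (measurable_const.indicator (hAmeas n)).aemeasurable
    _ = ∑' n, ℙ (A n) := by
      refine tsum_congr fun n => ?_
      rw [lintegral_indicator_const (hAmeas n), one_mul]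
  -- inclusion of A n
  have hincl : ∀ n, A n ⊆ (⋃ k, ⋃ (_ : n + 1 ≤ k), GE k) ∪ (⋃ i, ⋃ (_ : n + 1 ≤ 32 ^ i), ZE i) := by
    intro n ω hω
    rw [hA_def] at hω
    obtain ⟨k, hk, hSk⟩ := hω
    have hsum : (k:ℝ) * μ ≤ ∑ j ∈ Finset.range k, (gfun (X j ω) + zfun (X j ω)) := by
      have h1 : ∑ j ∈ Finset.range k, (gfun (X j ω) + zfun (X j ω))
          = ∑ j ∈ Finset.range k, (μ - X j ω) := Finset.sum_congr rfl fun j _ => hgz _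
      rw [h1, Finset.sum_sub_distrib, Finset.sum_const, Finset.card_range, ← hS k ω]
      simp only [nsmul_eq_mul]
      linarith
    rw [Finset.sum_add_distrib] at hsum
    rcases le_or_gt ((k:ℝ) * (μ/2)) (∑ j ∈ Finset.range k, gfun (X j ω)) with hcase | hcase
    · left
      refine Set.mem_iUnion.mpr ⟨k, Set.mem_iUnion.mpr ⟨hk, ?_⟩⟩
      rw [hGE_def]
      exact hcase
    · right
      have hzsum : (k:ℝ) * (μ/2) ≤ ∑ j ∈ Finset.range k, zfun (X j ω) := by linarith
      have hex : ∃ i, k ≤ 32 ^ i :=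
        ⟨k, le_of_lt (lt_of_lt_of_le (Nat.lt_two_pow_self (n := k)) (Nat.pow_le_pow_left (by norm_num) k))⟩
      obtain ⟨i0, hi0, hminim⟩ : ∃ i, k ≤ 32 ^ i ∧ ∀ m, m < i → ¬ k ≤ 32 ^ m :=
        ⟨Nat.find hex, Nat.find_spec hex, fun m hm => Nat.find_min hex hm⟩
      have hn32 : n + 1 ≤ 32 ^ i0 := le_trans hk hi0
      refine Set.mem_iUnion.mpr ⟨i0, Set.mem_iUnion.mpr ⟨hn32, ?_⟩⟩
      have hklow : ((32:ℝ) ^ i0) * (μ/64) ≤ (k:ℝ) * (μ/2) := by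
        rcases Nat.eq_zero_or_pos i0 with h0 | hpos
        · rw [h0]
          have h1k : (1:ℝ) ≤ (k:ℝ) := by exact_mod_cast by omega
          simp only [pow_zero, one_mul]
          have h2 := mul_le_mul_of_nonneg_right h1k (by positivity : (0:ℝ) ≤ μ/2)
          rw [one_mul] at h2
          linarith
        · obtain ⟨m, hm⟩ := Nat.exists_eq_succ_of_ne_zero (Nat.pos_iff_ne_zero.mp hpos)
          have hmin := hminim m (by omega)
          push_neg at hmin
          have h32m : ((32:ℕ) ^ m : ℝ) < (k:ℝ) := by exact_mod_cast hmin
          rw [hm]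
          push_cast at h32m ⊢
          have hp : ((32:ℝ)) ^ (m+1) * (μ/64) = (32:ℝ) ^ m * (μ/2) := by ring
          rw [hp]
          exact mul_le_mul_of_nonneg_right (le_of_lt h32m) (by positivity : (0:ℝ) ≤ μ/2)
      have hmono : ∑ j ∈ Finset.range k, zfun (X j ω) ≤ ∑ j ∈ Finset.range (32 ^ i0), zfun (X j ω) :=
        Finset.sum_le_sum_of_subset_of_nonneg
          (Finset.range_subset_range.mpr hi0) (fun j _ _ => hznn _)
      simp only [hZE_def, Set.mem_setOf_eq]
      push_cast
      calc (32:ℝ) ^ i0 * (μ/64) ≤ (k:ℝ) * (μ/2) := hklow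
      _ ≤ ∑ j ∈ Finset.range k, zfun (X j ω) := hzsum
      _ ≤ _ := hmono
  -- counting
  have hcount : ∀ (x : ℝ≥0∞) (m : ℕ), ∑' n : ℕ, (if n + 1 ≤ m then x else 0) = m * x := by
    intro x m
    rw [tsum_eq_sum (s := Finset.range m) (fun n hn => if_neg (by simp at hn; omega))]
    rw [Finset.sum_congr rfl (fun n hn => if_pos (by simp at hn; omega)), Finset.sum_const,
      Finset.card_range, nsmul_eq_mul]
  have hAn_le : ∀ n, ℙ (A n) ≤ (∑' k : ℕ, if n + 1 ≤ k then ℙ (GE k) else 0)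
      + (∑' i : ℕ, if n + 1 ≤ 32 ^ i then ℙ (ZE i) else 0) := by
    intro n
    refine le_trans (measure_mono (hincl n)) (le_trans (measure_union_le _ _) ?_)
    gcongr
    · refine le_trans (measure_iUnion_le _) (ENNReal.tsum_le_tsum fun k => ?_)
      by_cases h : n + 1 ≤ k
      · simp [h]
      · simp [h]
    · refine le_trans (measure_iUnion_le _) (ENNReal.tsum_le_tsum fun i => ?_)
      by_cases h : n + 1 ≤ 32 ^ i
      · simp [h]
      · simp [h]
  have htotal : ∑' n, ℙ (A n) ≤ (∑' k : ℕ, (k:ℝ≥0∞) * ℙ (GE k))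
      + (∑' i : ℕ, ((32 ^ i : ℕ):ℝ≥0∞) * ℙ (ZE i)) := by
    calc ∑' n, ℙ (A n) ≤ ∑' n, ((∑' k : ℕ, if n + 1 ≤ k then ℙ (GE k) else 0)
        + (∑' i : ℕ, if n + 1 ≤ 32 ^ i then ℙ (ZE i) else 0)) := ENNReal.tsum_le_tsum hAn_le
    _ = (∑' n, ∑' k : ℕ, if n + 1 ≤ k then ℙ (GE k) else 0)
        + (∑' n, ∑' i : ℕ, if n + 1 ≤ 32 ^ i then ℙ (ZE i) else 0) := ENNReal.tsum_add
    _ = (∑' k : ℕ, ∑' n : ℕ, if n + 1 ≤ k then ℙ (GE k) else 0)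
        + (∑' i : ℕ, ∑' n : ℕ, if n + 1 ≤ 32 ^ i then ℙ (ZE i) else 0) := by
        congr 1 <;> rw [ENNReal.tsum_comm]
    _ = (∑' k : ℕ, (k:ℝ≥0∞) * ℙ (GE k)) + (∑' i : ℕ, ((32 ^ i : ℕ):ℝ≥0∞) * ℙ (ZE i)) := by
        congr 1
        · exact tsum_congr fun k => hcount _ k
        · exact tsum_congr fun i => hcount _ (32 ^ i)
  -- ========== G part ==========
  set vG := V + lam ^ 2 with hvG_def
  have hvG0 : 0 < vG := by nlinarith [sq_nonneg lam]
  set θ1 := min (1/lam) (μ/(4*vG)) with hθ1_def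
  have hθ10 : 0 < θ1 := lt_min (by positivity) (by positivity)
  have hθ1lam : θ1 * lam ≤ 1 := by
    have h := min_le_left (1/lam) (μ/(4*vG))
    calc θ1 * lam ≤ (1/lam) * lam := mul_le_mul_of_nonneg_right h hlam0.le
    _ = 1 := by field_simp
  have hθ1v : θ1 * vG ≤ μ/4 := by
    have h := min_le_right (1/lam) (μ/(4*vG))
    calc θ1 * vG ≤ (μ/(4*vG)) * vG := mul_le_mul_of_nonneg_right h hvG0.le
    _ = μ/4 := by field_simp
  have hGEbound : ∀ k : ℕ, ℙ (GE k) ≤ ENNReal.ofReal (Real.exp (-(θ1 * (μ/4)) * k)) := by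
    intro k
    have hch := chernoff_bound X hmeas hindep hident gfun hgmeas lam 0 vG (μ/2) θ1
      hg_le_lam hθ10.le hθ1lam hgint hg2int hgmean hg2mean k
    have hGEk : GE k = {ω | (k:ℝ) * (μ/2) ≤ ∑ j ∈ Finset.range k, gfun (X j ω)} := by
      rw [hGE_def]
    rw [hGEk]
    refine le_trans hch (ENNReal.ofReal_le_ofReal (Real.exp_le_exp.mpr ?_))
    have hE : θ1*(μ/4) ≤ θ1*(μ/2 - 0 - θ1*vG) :=
      mul_le_mul_of_nonneg_left (by linarith) hθ10.le
    have hk0 : (0:ℝ) ≤ (k:ℝ) := Nat.cast_nonneg k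
    have := mul_le_mul_of_nonneg_right hE hk0
    linarith
  have hSG : (∑' k : ℕ, (k:ℝ≥0∞) * ℙ (GE k)) ≠ ⊤ := by
    set ρ := Real.exp (-(θ1 * (μ/4))) with hρ_def
    have hρ1 : ρ < 1 := by
      rw [hρ_def, Real.exp_lt_one_iff]
      nlinarith
    have hρ0 : 0 < ρ := Real.exp_pos _
    have hsummable : Summable (fun k : ℕ => (k:ℝ) ^ 1 * ρ ^ k) :=
      summable_pow_mul_geometric_of_norm_lt_one 1
        (by rw [Real.norm_eq_abs, abs_of_pos hρ0]; exact hρ1)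
    have hb : ∀ k : ℕ, (k:ℝ≥0∞) * ℙ (GE k) ≤ ENNReal.ofReal ((k:ℝ) ^ 1 * ρ ^ k) := by
      intro k
      have h1 : ℙ (GE k) ≤ ENNReal.ofReal (ρ ^ k) := by
        refine le_trans (hGEbound k) (le_of_eq ?_)
        congr 1
        rw [hρ_def]
        have harg : (-(θ1 * (μ/4)) * (k:ℝ)) = (k:ℕ) * (-(θ1 * (μ/4))) := by push_cast; ring
        rw [harg, Real.exp_nat_mul]
      calc (k:ℝ≥0∞) * ℙ (GE k) ≤ (k:ℝ≥0∞) * ENNReal.ofReal (ρ ^ k) := mul_le_mul_right h1 _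
      _ = ENNReal.ofReal ((k:ℝ) ^ 1 * ρ ^ k) := by
          rw [← ENNReal.ofReal_natCast k, ← ENNReal.ofReal_mul (Nat.cast_nonneg k)]
          norm_num
    refine ne_top_of_le_ne_top ?_ (ENNReal.tsum_le_tsum hb)
    rw [← ENNReal.ofReal_tsum_of_nonneg (fun k => by positivity) hsummable]
    exact ENNReal.ofReal_ne_top
  -- ========== Z part setup ==========
  set wfun : ℕ → ℝ → ℝ := fun i x => min (zfun x) (T0 * 16 ^ i) with hwfun_def
  have h16 : ∀ i : ℕ, (1:ℝ) ≤ 16 ^ i := fun i => one_le_pow₀ (by norm_num)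
  have hT16 : ∀ i : ℕ, (1:ℝ) ≤ T0 * 16 ^ i := fun i => by nlinarith [h16 i]
  have hTpos : ∀ i : ℕ, (0:ℝ) < T0 * 16 ^ i := fun i => lt_of_lt_of_le one_pos (hT16 i)
  have hwmeas : ∀ i, Measurable (wfun i) := fun i => hzmeas.min measurable_const
  have hwnn : ∀ i x, 0 ≤ wfun i x := fun i x => le_min (hznn x) (hTpos i).le
  have hw_le_z : ∀ i x, wfun i x ≤ zfun x := fun i x => min_le_left _ _
  have hw_le_T : ∀ i x, wfun i x ≤ T0 * 16 ^ i := fun i x => min_le_right _ _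
  have hwint : ∀ i, Integrable (fun ω => wfun i (X 0 ω)) ℙ := by
    intro i
    refine Integrable.mono' hzint (((hwmeas i).comp (hmeas 0)).aestronglyMeasurable)
      (ae_of_all _ fun ω => ?_)
    rw [Real.norm_eq_abs, abs_of_nonneg (hwnn i _)]
    exact hw_le_z i _
  have hw2int : ∀ i, Integrable (fun ω => wfun i (X 0 ω) ^ 2) ℙ := by
    intro i
    refine Integrable.mono' hz2int ((((hwmeas i).comp (hmeas 0)).pow_const 2).aestronglyMeasurable)
      (ae_of_all _ fun ω => ?_)
    rw [Real.norm_eq_abs, abs_of_nonneg (sq_nonneg _)]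
    exact pow_le_pow_left₀ (hwnn i _) (hw_le_z i _) 2
  have hwmean : ∀ i, ∫ ω, wfun i (X 0 ω) ∂ℙ ≤ μ/256 := fun i =>
    le_trans (integral_mono (hwint i) hzint fun ω => hw_le_z i _) hzmean
  have hw2mean : ∀ i, ∫ ω, wfun i (X 0 ω) ^ 2 ∂ℙ ≤ V := fun i =>
    le_trans (integral_mono (hw2int i) hz2int fun ω =>
      pow_le_pow_left₀ (hwnn i _) (hw_le_z i _) 2) hz2mean
  -- events
  set Wev : ℕ → Set Ω := fun i =>
    {ω | ((32 ^ i : ℕ):ℝ) * (μ/128) ≤ ∑ j ∈ Finset.range (32 ^ i), wfun i (X j ω)} with hWev_def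
  set Bev : ℕ → Set Ω := fun i =>
    ⋃ j ∈ Finset.range (32 ^ i), {ω | ((32 ^ i : ℕ):ℝ) * (μ/128) ≤ zfun (X j ω)} with hBev_def
  set Pev : ℕ → Set Ω := fun i =>
    ⋃ j ∈ Finset.range (32 ^ i), ⋃ j' ∈ Finset.range j,
      ({ω | T0 * 16 ^ i ≤ zfun (X j ω)} ∩ {ω | T0 * 16 ^ i ≤ zfun (X j' ω)}) with hPev_def
  -- inclusion
  have hZincl : ∀ i, ZE i ⊆ Wev i ∪ Bev i ∪ Pev i := by
    intro i ω hω
    rw [hZE_def] at hω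
    have hz_total : ((32 ^ i:ℕ):ℝ) * (μ/64) ≤ ∑ j ∈ Finset.range (32 ^ i), zfun (X j ω) := hω
    by_cases hpv : ω ∈ Pev i
    · exact Or.inr hpv
    by_cases hbg : ω ∈ Bev i
    · exact Or.inl (Or.inr hbg)
    refine Or.inl (Or.inl ?_)
    rw [hPev_def] at hpv
    rw [hBev_def] at hbg
    simp only [Set.mem_iUnion, Finset.mem_range, Set.mem_inter_iff, Set.mem_setOf_eq,
      not_exists, not_and, exists_prop] at hpv hbg
    rw [hWev_def]
    simp only [Set.mem_setOf_eq]
    have hKnn : (0:ℝ) ≤ ((32 ^ i:ℕ):ℝ) := Nat.cast_nonneg _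
    by_cases hex : ∃ j ∈ Finset.range (32 ^ i), T0 * 16 ^ i ≤ zfun (X j ω)
    · obtain ⟨j0, hj0mem, hj0⟩ := hex
      have hothers : ∀ j ∈ Finset.range (32 ^ i), j ≠ j0 → zfun (X j ω) < T0 * 16 ^ i := by
        intro j hj hne
        by_contra hge
        push_neg at hge
        rcases Nat.lt_or_ge j j0 with hlt | hge2
        · exact hpv j0 (Finset.mem_range.mp hj0mem) j hlt hj0 hge
        · have hgt : j0 < j := by omega
          exact hpv j (Finset.mem_range.mp hj) j0 hgt hge hj0
      have hzw : ∀ j ∈ (Finset.range (32 ^ i)).erase j0, zfun (X j ω) = wfun i (X j ω) := by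
        intro j hj
        have h1 := hothers j (Finset.mem_of_mem_erase hj) (Finset.ne_of_mem_erase hj)
        rw [hwfun_def]
        simp only []
        rw [min_eq_left h1.le]
      have hsplit := Finset.add_sum_erase (Finset.range (32 ^ i)) (fun j => zfun (X j ω)) hj0mem
      have herase_eq : ∑ j ∈ (Finset.range (32 ^ i)).erase j0, zfun (X j ω)
          = ∑ j ∈ (Finset.range (32 ^ i)).erase j0, wfun i (X j ω) := Finset.sum_congr rfl hzw
      have hwle : ∑ j ∈ (Finset.range (32 ^ i)).erase j0, wfun i (X j ω)
          ≤ ∑ j ∈ Finset.range (32 ^ i), wfun i (X j ω) :=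
        Finset.sum_le_sum_of_subset_of_nonneg (Finset.erase_subset _ _) (fun j _ _ => hwnn i _)
      have hbig0 : zfun (X j0 ω) < ((32 ^ i:ℕ):ℝ) * (μ/128) :=
        lt_of_not_ge (hbg j0 (Finset.mem_range.mp hj0mem))
      have hK64 : ((32 ^ i:ℕ):ℝ) * (μ/64) - ((32 ^ i:ℕ):ℝ) * (μ/128) = ((32 ^ i:ℕ):ℝ) * (μ/128) := by
        ring
      linarith [hz_total, hsplit, herase_eq, hwle, hbig0]
    · push_neg at hex
      have hall : ∀ j ∈ Finset.range (32 ^ i), zfun (X j ω) = wfun i (X j ω) := by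
        intro j hj
        rw [hwfun_def]
        simp only []
        rw [min_eq_left (hex j hj).le]
      have heq2 : ∑ j ∈ Finset.range (32 ^ i), zfun (X j ω)
          = ∑ j ∈ Finset.range (32 ^ i), wfun i (X j ω) := Finset.sum_congr rfl hall
      have hmono2 : ((32 ^ i:ℕ):ℝ) * (μ/128) ≤ ((32 ^ i:ℕ):ℝ) * (μ/64) :=
        mul_le_mul_of_nonneg_left (by linarith) hKnn
      linarith
  -- ========== W bound ==========
  set β2 := μ/(512*T0) with hβ2_def
  have hβ20 : 0 < β2 := by positivity
  have hWbound : ∀ i, ℙ (Wev i) ≤ ENNReal.ofReal (Real.exp (-(β2 * 2 ^ i))) := by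
    intro i
    have hθi0 : (0:ℝ) ≤ 1/(T0*16^i) := by positivity
    have hθiM : (1/(T0*16^i)) * (T0*16^i) ≤ 1 := by
      rw [one_div, inv_mul_cancel₀ (hTpos i).ne']
    have hch := chernoff_bound X hmeas hindep hident (wfun i) (hwmeas i) (T0*16^i) (μ/256) V
      (μ/128) (1/(T0*16^i)) (hw_le_T i) hθi0 hθiM (hwint i) (hw2int i) (hwmean i) (hw2mean i)
      (32 ^ i)
    have hWeq : Wev i = {ω | ((32 ^ i:ℕ):ℝ) * (μ/128) ≤ ∑ j ∈ Finset.range (32 ^ i), wfun i (X j ω)} := by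
      rw [hWev_def]
    rw [hWeq]
    refine le_trans hch (ENNReal.ofReal_le_ofReal (Real.exp_le_exp.mpr ?_))
    -- exponent comparison
    have hcast : ((32 ^ i:ℕ):ℝ) = 2^i * 16^i := by
      push_cast
      rw [← mul_pow]
      norm_num
    have hθV : (1/(T0*16^i))*V ≤ μ/512 := by
      have h1 : (1/(T0*16^i))*V = V/(T0*16^i) := by ring
      rw [h1]
      calc V/(T0*16^i) ≤ V/T0 := by
            apply div_le_div_of_nonneg_left hV.le hT00
            nlinarith [h16 i]
      _ ≤ μ/512 := hVT0
    have hexp : β2 * 2^i ≤ (1/(T0*16^i)) * (μ/128 - μ/256 - (1/(T0*16^i))*V) * ((32 ^ i:ℕ):ℝ) := by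
      have hEge : μ/512 ≤ μ/128 - μ/256 - (1/(T0*16^i))*V := by linarith
      calc β2 * 2^i = (1/(T0*16^i))*(μ/512)*(2^i*16^i) := by
            rw [hβ2_def]
            field_simp
      _ ≤ (1/(T0*16^i))*(μ/128 - μ/256 - (1/(T0*16^i))*V)*(2^i*16^i) := by
            refine mul_le_mul_of_nonneg_right (mul_le_mul_of_nonneg_left hEge (by positivity)) ?_
            positivity
      _ = (1/(T0*16^i))*(μ/128 - μ/256 - (1/(T0*16^i))*V)*((32 ^ i:ℕ):ℝ) := by rw [hcast]
    linarith
  have hSW : (∑' i : ℕ, ((32 ^ i:ℕ):ℝ≥0∞) * ℙ (Wev i)) ≠ ⊤ := by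
    have hbd : ∀ i : ℕ, ((32 ^ i:ℕ):ℝ≥0∞) * ℙ (Wev i)
        ≤ ENNReal.ofReal ((46656/β2^6) * (1/2)^i) := by
      intro i
      calc ((32 ^ i:ℕ):ℝ≥0∞) * ℙ (Wev i)
          ≤ ((32 ^ i:ℕ):ℝ≥0∞) * ENNReal.ofReal (Real.exp (-(β2*2^i))) :=
            mul_le_mul_right (hWbound i) _
      _ = ENNReal.ofReal (((32 ^ i:ℕ):ℝ) * Real.exp (-(β2*2^i))) := by
            rw [← ENNReal.ofReal_natCast, ← ENNReal.ofReal_mul (Nat.cast_nonneg _)]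
      _ ≤ ENNReal.ofReal ((46656/β2^6) * (1/2)^i) := by
            refine ENNReal.ofReal_le_ofReal ?_
            have hx : (0:ℝ) < β2 * 2^i := by positivity
            have h6 := pow_six_le_exp hx.le
            have hexpb : Real.exp (-(β2*2^i)) ≤ 46656/(β2*2^i)^6 := by
              rw [Real.exp_neg, le_div_iff₀ (by positivity : (0:ℝ) < (β2*2^i)^6)]
              calc (Real.exp (β2*2^i))⁻¹ * (β2*2^i)^6
                  ≤ (Real.exp (β2*2^i))⁻¹ * (46656 * Real.exp (β2*2^i)) := by
                    exact mul_le_mul_of_nonneg_left h6 (inv_nonneg.mpr (Real.exp_pos _).le)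
              _ = 46656 := by field_simp
            calc ((32 ^ i:ℕ):ℝ) * Real.exp (-(β2*2^i)) ≤ (32:ℝ)^i * (46656/(β2*2^i)^6) := by
                  push_cast
                  exact mul_le_mul_of_nonneg_left hexpb (by positivity)
            _ = (46656/β2^6) * (1/2)^i := by
                  have h1 : ((2:ℝ)^i)^6 = 64^i := by
                    rw [← pow_mul, Nat.mul_comm, pow_mul]; norm_num
                  have h2 : (32:ℝ)^i * 2^i = 64^i := by rw [← mul_pow]; norm_num
                  rw [mul_pow, h1, one_div, inv_pow, ← one_div]
                  field_simp
                  nlinarith [h2, pow_pos (show (0:ℝ) < 64 by norm_num) i, pow_pos hβ20 6]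
    have hsummable : Summable (fun i : ℕ => (46656/β2^6) * ((1:ℝ)/2)^i) :=
      (summable_geometric_of_lt_one (by norm_num) (by norm_num)).mul_left _
    refine ne_top_of_le_ne_top ?_ (ENNReal.tsum_le_tsum hbd)
    rw [← ENNReal.ofReal_tsum_of_nonneg (fun i => by positivity) hsummable]
    exact ENNReal.ofReal_ne_top
  -- ========== B bound ==========
  have hid_z : ∀ (c : ℝ) (j : ℕ), ℙ {ω | c ≤ zfun (X j ω)} = ℙ {ω | c ≤ zfun (X 0 ω)} := by
    intro c j
    have h := ((hident j).comp hzmeas).measure_mem_eq (measurableSet_Ici (a := c))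
    simpa [Set.preimage, Set.mem_Ici, Function.comp] using h
  have hBbound : ∀ i, ℙ (Bev i)
      ≤ ((32 ^ i:ℕ):ℝ≥0∞) * ℙ {ω | (μ/128) * 32 ^ i ≤ zfun (X 0 ω)} := by
    intro i
    rw [hBev_def]
    refine le_trans (measure_biUnion_finset_le _ _) ?_
    rw [Finset.sum_congr rfl (fun j _ => hid_z (((32 ^ i:ℕ):ℝ) * (μ/128)) j),
      Finset.sum_const, Finset.card_range, nsmul_eq_mul]
    have hseteq : {ω | ((32 ^ i:ℕ):ℝ) * (μ/128) ≤ zfun (X 0 ω)}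
        = {ω | (μ/128) * (32:ℝ) ^ i ≤ zfun (X 0 ω)} := by
      ext ω
      simp only [Set.mem_setOf_eq]
      constructor <;> intro h <;> (push_cast at *; linarith)
    rw [hseteq]
  have hSB : (∑' i : ℕ, ((32 ^ i:ℕ):ℝ≥0∞) * ℙ (Bev i)) ≠ ⊤ := by
    have hbd : ∀ i : ℕ, ((32 ^ i:ℕ):ℝ≥0∞) * ℙ (Bev i)
        ≤ (1024:ℝ≥0∞)^i * ℙ {ω | (μ/128) * 32 ^ i ≤ zfun (X 0 ω)} := by
      intro i
      calc ((32 ^ i:ℕ):ℝ≥0∞) * ℙ (Bev i)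
          ≤ ((32 ^ i:ℕ):ℝ≥0∞) * (((32 ^ i:ℕ):ℝ≥0∞) * ℙ {ω | (μ/128) * 32 ^ i ≤ zfun (X 0 ω)}) :=
            mul_le_mul_right (hBbound i) _
      _ = (1024:ℝ≥0∞)^i * ℙ {ω | (μ/128) * 32 ^ i ≤ zfun (X 0 ω)} := by
            rw [← mul_assoc]
            congr 1
            push_cast
            rw [← mul_pow]
            norm_num
    refine ne_top_of_le_ne_top ?_ (ENNReal.tsum_le_tsum hbd)
    refine ne_of_lt (lt_of_le_of_lt (dyadic_tail (fun ω => zfun (X 0 ω))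
      (hzmeas.comp (hmeas 0)) (μ/128) (by positivity) hz2int) ENNReal.ofReal_lt_top)
  -- ========== P bound ==========
  have hpv : ∀ i, ℙ {ω | T0 * 16 ^ i ≤ zfun (X 0 ω)} ≤ ENNReal.ofReal (V / (T0*16^i)^2) := by
    intro i
    have hsub : {ω | T0 * 16 ^ i ≤ zfun (X 0 ω)}
        ⊆ {ω | ENNReal.ofReal ((T0*16^i)^2) ≤ ENNReal.ofReal (zfun (X 0 ω)^2)} := by
      intro ω hω
      simp only [Set.mem_setOf_eq] at *
      refine ENNReal.ofReal_le_ofReal ?_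
      have h0 : 0 ≤ T0*16^i := (hTpos i).le
      nlinarith
    refine le_trans (measure_mono hsub) ?_
    have hmk := meas_ge_le_lintegral_div (μ := ℙ)
      (f := fun ω => ENNReal.ofReal (zfun (X 0 ω)^2))
      (((hzmeas.comp (hmeas 0)).pow_const 2).ennreal_ofReal.aemeasurable)
      (ε := ENNReal.ofReal ((T0*16^i)^2))
      (by simp only [ne_eq, ENNReal.ofReal_eq_zero, not_le]; positivity) ENNReal.ofReal_ne_top
    refine le_trans hmk ?_
    rw [← ofReal_integral_eq_lintegral_ofReal hz2int (ae_of_all _ fun ω => sq_nonneg _)]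
    rw [ENNReal.ofReal_div_of_pos (by positivity : (0:ℝ) < (T0*16^i)^2)]
    exact ENNReal.div_le_div_right (ENNReal.ofReal_le_ofReal hz2mean) _
  have hPbound : ∀ i, ℙ (Pev i)
      ≤ (((32 ^ i:ℕ):ℝ≥0∞) * ((32 ^ i:ℕ):ℝ≥0∞)) * (ENNReal.ofReal (V/(T0*16^i)^2)) ^ 2 := by
    intro i
    rw [hPev_def]
    refine le_trans (measure_biUnion_finset_le _ _) ?_
    have hinner : ∀ j ∈ Finset.range (32 ^ i),
        ℙ (⋃ j' ∈ Finset.range j,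
          ({ω | T0 * 16 ^ i ≤ zfun (X j ω)} ∩ {ω | T0 * 16 ^ i ≤ zfun (X j' ω)}))
        ≤ ((32 ^ i:ℕ):ℝ≥0∞) * (ENNReal.ofReal (V/(T0*16^i)^2)) ^ 2 := by
      intro j hj
      refine le_trans (measure_biUnion_finset_le _ _) ?_
      have hterm : ∀ j' ∈ Finset.range j,
          ℙ ({ω | T0 * 16 ^ i ≤ zfun (X j ω)} ∩ {ω | T0 * 16 ^ i ≤ zfun (X j' ω)})
          ≤ (ENNReal.ofReal (V/(T0*16^i)^2)) ^ 2 := by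
        intro j' hj'
        have hne : j ≠ j' := by
          have := Finset.mem_range.mp hj'
          omega
        have hind : IndepFun (fun ω => zfun (X j ω)) (fun ω => zfun (X j' ω)) ℙ :=
          (hindep.indepFun hne).comp hzmeas hzmeas
        have hint := hind.measure_inter_preimage_eq_mul _ _
          (measurableSet_Ici (a := T0 * 16 ^ i)) (measurableSet_Ici (a := T0 * 16 ^ i))
        have hseteq : {ω | T0 * 16 ^ i ≤ zfun (X j ω)} ∩ {ω | T0 * 16 ^ i ≤ zfun (X j' ω)}
            = ((fun ω => zfun (X j ω)) ⁻¹' Set.Ici (T0 * 16 ^ i))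
              ∩ ((fun ω => zfun (X j' ω)) ⁻¹' Set.Ici (T0 * 16 ^ i)) := rfl
        rw [hseteq, hint]
        have hppre : ∀ m : ℕ, ℙ ((fun ω => zfun (X m ω)) ⁻¹' Set.Ici (T0 * 16 ^ i))
            ≤ ENNReal.ofReal (V/(T0*16^i)^2) := by
          intro m
          have : ((fun ω => zfun (X m ω)) ⁻¹' Set.Ici (T0 * 16 ^ i))
              = {ω | T0 * 16 ^ i ≤ zfun (X m ω)} := rfl
          rw [this, hid_z]
          exact hpv i
        rw [sq]
        exact mul_le_mul' (hppre j) (hppre j')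
      refine le_trans (Finset.sum_le_sum hterm) ?_
      rw [Finset.sum_const, Finset.card_range, nsmul_eq_mul]
      refine mul_le_mul_left ?_ _
      exact_mod_cast Nat.cast_le.mpr (le_of_lt (Finset.mem_range.mp hj))
    refine le_trans (Finset.sum_le_sum hinner) ?_
    rw [Finset.sum_const, Finset.card_range, nsmul_eq_mul, ← mul_assoc]
  have hSP : (∑' i : ℕ, ((32 ^ i:ℕ):ℝ≥0∞) * ℙ (Pev i)) ≠ ⊤ := by
    have hbd : ∀ i : ℕ, ((32 ^ i:ℕ):ℝ≥0∞) * ℙ (Pev i)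
        ≤ ENNReal.ofReal ((V^2/T0^4) * (1/2)^i) := by
      intro i
      have hstep := mul_le_mul_right (hPbound i) (((32 ^ i:ℕ):ℝ≥0∞))
      refine le_trans hstep (le_of_eq ?_)
      have hVT2 : (0:ℝ) ≤ V/(T0*16^i)^2 := by positivity
      have e1 : ((32 ^ i:ℕ):ℝ≥0∞) = ENNReal.ofReal ((32:ℝ)^i) := by
        rw [← ENNReal.ofReal_natCast (32 ^ i)]
        congr 1
        push_cast
        ring
      have e2 : (ENNReal.ofReal (V/(T0*16^i)^2))^2 = ENNReal.ofReal ((V/(T0*16^i)^2)^2) :=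
        (ENNReal.ofReal_pow hVT2 2).symm
      rw [e1, e2,
        ← ENNReal.ofReal_mul (p := (32:ℝ)^i) (by positivity),
        ← ENNReal.ofReal_mul (p := (32:ℝ)^i * (32:ℝ)^i) (by positivity),
        ← ENNReal.ofReal_mul (p := (32:ℝ)^i) (by positivity)]
      congr 1
      rw [show (32:ℝ)^i * (((32:ℝ)^i * (32:ℝ)^i) * ((V/(T0*16^i)^2)^2))
          = (32:ℝ)^i * ((32:ℝ)^i * ((32:ℝ)^i * (V/((T0*16^i)^2))^2)) from by ring]
      exact pow_identity_P V T0 hT00 i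
    have hsummable : Summable (fun i : ℕ => (V^2/T0^4) * ((1:ℝ)/2)^i) :=
      (summable_geometric_of_lt_one (by norm_num) (by norm_num)).mul_left _
    refine ne_top_of_le_ne_top ?_ (ENNReal.tsum_le_tsum hbd)
    rw [← ENNReal.ofReal_tsum_of_nonneg (fun i => by positivity) hsummable]
    exact ENNReal.ofReal_ne_top
  -- ========== combine Z ==========
  have hSZ : (∑' i : ℕ, ((32 ^ i:ℕ):ℝ≥0∞) * ℙ (ZE i)) ≠ ⊤ := by
    have hbd : ∀ i : ℕ, ((32 ^ i:ℕ):ℝ≥0∞) * ℙ (ZE i)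
        ≤ (((32 ^ i:ℕ):ℝ≥0∞) * ℙ (Wev i) + ((32 ^ i:ℕ):ℝ≥0∞) * ℙ (Bev i))
          + ((32 ^ i:ℕ):ℝ≥0∞) * ℙ (Pev i) := by
      intro i
      rw [← mul_add, ← mul_add]
      refine mul_le_mul_right ?_ _
      refine le_trans (measure_mono (hZincl i)) ?_
      refine le_trans (measure_union_le _ _) ?_
      gcongr
      exact measure_union_le _ _
    refine ne_top_of_le_ne_top ?_ (ENNReal.tsum_le_tsum hbd)
    rw [ENNReal.tsum_add, ENNReal.tsum_add]
    exact ENNReal.add_ne_top.mpr ⟨ENNReal.add_ne_top.mpr ⟨hSW, hSB⟩, hSP⟩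
  -- ========== conclusion ==========
  have hfin : ∫⁻ ω, Nhat ω ∂ℙ < ⊤ := by
    refine lt_of_le_of_lt (le_trans hlint htotal) ?_
    exact ENNReal.add_lt_top.mpr ⟨lt_top_iff_ne_top.mpr hSG, lt_top_iff_ne_top.mpr hSZ⟩
  refine ⟨?_, hfin⟩
  have hNmeas : Measurable Nhat := by
    have heq : Nhat = fun ω => ⨆ n : ℕ, (if S n ω ≤ 0 ∧ 1 ≤ n then (n:ℝ≥0∞) else 0) := by
      funext ω
      rw [hNhat ω]
      apply le_antisymm
      · refine sSup_le ?_
        rintro x ⟨n, hn1, hSn, rfl⟩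
        refine le_trans ?_ (le_iSup _ n)
        rw [if_pos ⟨hSn, hn1⟩]
      · refine iSup_le fun n => ?_
        split_ifs with h
        · exact le_sSup ⟨n, h.2, h.1, rfl⟩
        · exact zero_le
    rw [heq]
    refine Measurable.iSup fun n => Measurable.ite ?_ measurable_const measurable_const
    have : {a : Ω | S n a ≤ 0 ∧ 1 ≤ n} = {a : Ω | S n a ≤ 0} ∩ {a : Ω | 1 ≤ n} := rfl
    rw [this]
    exact (measurableSet_le (hSmeas n) measurable_const).inter (MeasurableSet.const _)
  exact ae_lt_top hNmeas hfin.ne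
end

section
/- Let X_1, X_2, ... be i.i.d. real random variables with mean μ and E[X_1^{2r}] < ∞; let Y_k = X_k 1_{|X_k| ≤ n^{4/5}} - E[X_k 1_{|X_k| ≤ n^{4/5}}]. Then there is a constant K' (independent of n) such that E[(Y_1 + ... + Y_n)^{2r}] ≤ K' · n^r · n^{4r/5}, and consequently P(|Y_1 + ... + Y_n| > n/16) ≤ 16^{2r} K' n^{9r/5 - 2r} → 0 summably against n^{r-1} for r ≥ 2. -/
open MeasureTheory ProbabilityTheory Filter Finset
open scoped ENNReal
set_option linter.unusedSectionVars false

section Aux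
variable {Ω : Type*} [MeasureSpace Ω] [IsProbabilityMeasure (ℙ : Measure Ω)]

lemma myIntBdd {f : Ω → ℝ} (hf : Measurable f) {C : ℝ} (h : ∀ ω, |f ω| ≤ C) :
    Integrable f ℙ :=
  ⟨hf.aestronglyMeasurable, HasFiniteIntegral.of_bounded (C := C)
    (ae_of_all _ fun ω => by simpa using h ω)⟩

lemma myAmgm (x c : ℝ) (l : ℕ) :
    2 * c * |x| ^ (2*l+1) ≤ x ^ (2*l+2) + c^2 * x ^ (2*l) := by
  have h1 : x ^ (2*l) = (x^2)^l := by rw [pow_mul]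
  have h2 : x ^ (2*l+2) = (x^2)^l * x^2 := by rw [pow_add, pow_mul]
  have h3 : |x| ^ (2*l+1) = (x^2)^l * |x| := by
    rw [pow_succ, pow_mul, sq_abs]
  rw [h1, h2, h3]
  have hu : (0:ℝ) ≤ (x^2)^l := by positivity
  nlinarith [mul_nonneg hu (sq_nonneg (|x| - c)), sq_abs x, abs_nonneg x]

lemma myIndepMul (Z : ℕ → Ω → ℝ) (hm : ∀ i, Measurable (Z i))
    (hind : iIndepFun Z ℙ) (n j k : ℕ) :
    ∫ ω, (∑ i ∈ Finset.range n, Z i ω)^j * (Z n ω)^k ∂ℙ =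
      (∫ ω, (∑ i ∈ Finset.range n, Z i ω)^j ∂ℙ) * (∫ ω, (Z n ω)^k ∂ℙ) := by
  have h0 : IndepFun (fun ω => ∑ i ∈ Finset.range n, Z i ω) (Z n) ℙ := by
    have h := hind.indepFun_sum_range_succ hm n
    have he : (∑ j ∈ Finset.range n, Z j) = (fun ω => ∑ i ∈ Finset.range n, Z i ω) := by
      funext ω; simp
    rwa [he] at h
  have h1 : IndepFun (fun ω => (∑ i ∈ Finset.range n, Z i ω)^j) (fun ω => (Z n ω)^k) ℙ :=
    h0.comp (measurable_id.pow_const j) (measurable_id.pow_const k)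
  exact h1.integral_fun_mul_eq_mul_integral
    ((Finset.measurable_sum _ (fun i _ => hm i)).pow_const j).aestronglyMeasurable
    ((hm n).pow_const k).aestronglyMeasurable

lemma myAbsInt {f : Ω → ℝ} : |∫ ω, f ω ∂ℙ| ≤ ∫ ω, |f ω| ∂ℙ := by
  simpa [Real.norm_eq_abs] using norm_integral_le_integral_norm (μ := ℙ) f

theorem moment_key (m : ℕ) :
    ∃ D : ℝ, 1 ≤ D ∧ ∀ (Z : ℕ → Ω → ℝ), (∀ i, Measurable (Z i)) →
      iIndepFun Z ℙ → ∀ (b v : ℝ), 0 < b → 0 ≤ v →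
      (∀ i ω, |Z i ω| ≤ b) → (∀ i, ∫ ω, Z i ω ∂ℙ = 0) →
      (∀ i, ∫ ω, (Z i ω)^2 ∂ℙ ≤ v) →
      ∀ l, l ≤ m → ∀ n : ℕ,
        ∫ ω, (∑ k ∈ Finset.range n, Z k ω) ^ (2*l) ∂ℙ ≤ D * ((n:ℝ) * v + b^2) ^ l := by
  induction m with
  | zero =>
    refine ⟨1, le_refl 1, fun Z _ _ b v _ _ _ _ _ l hl n => ?_⟩
    interval_cases l
    simp
  | succ m IH =>
    obtain ⟨D, hD1, hD⟩ := IH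
    refine ⟨4^(m+1) * D, ?_, ?_⟩
    · have : (1:ℝ) ≤ 4^(m+1) := one_le_pow₀ (by norm_num)
      nlinarith
    intro Z hZm hind b v hb hv hZb hZ0 hZv l hl n
    have hq0 : ∀ k : ℕ, (0:ℝ) ≤ (k:ℝ) * v + b^2 := fun k => by positivity
    rcases Nat.lt_succ_iff_lt_or_eq.mp (Nat.lt_succ_of_le hl) with hlm | rfl
    · -- l ≤ m : use IH with larger constant
      have h := hD Z hZm hind b v hb hv hZb hZ0 hZv l (Nat.lt_succ_iff.mp hlm) n
      have h4 : (1:ℝ) ≤ 4^(m+1) := one_le_pow₀ (by norm_num)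
      calc ∫ ω, (∑ k ∈ Finset.range n, Z k ω) ^ (2*l) ∂ℙ
          ≤ D * ((n:ℝ) * v + b^2) ^ l := h
        _ ≤ 4^(m+1) * D * ((n:ℝ) * v + b^2) ^ l :=
            mul_le_mul_of_nonneg_right (le_mul_of_one_le_left (by linarith) h4)
              (pow_nonneg (hq0 n) l)
    · -- l = m + 1 : the hard case
      have hDpos : (0:ℝ) < D := lt_of_lt_of_le one_pos hD1
      -- one-step expansion bound
      have key : ∀ n : ℕ,
          ∫ ω, (∑ k ∈ Finset.range (n+1), Z k ω) ^ (2*(m+1)) ∂ℙ ≤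
            (∫ ω, (∑ k ∈ Finset.range n, Z k ω) ^ (2*(m+1)) ∂ℙ)
              + 4^(m+1) * D * v * (((n:ℝ)+1) * v + b^2) ^ m := by
        intro n
        set S : Ω → ℝ := fun ω => ∑ k ∈ Finset.range n, Z k ω with hS
        set q : ℝ := ((n:ℝ)+1) * v + b^2 with hqdef
        have hnv : (0:ℝ) ≤ ((n:ℝ)+1) * v := by positivity
        have hqpos : 0 < q := by rw [hqdef]; positivity
        set c : ℝ := Real.sqrt q with hcdef
        have hcpos : 0 < c := Real.sqrt_pos.mpr hqpos
        have hc2 : c^2 = q := Real.sq_sqrt hqpos.le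
        have hbc : b ≤ c := by
          rw [hcdef, ← Real.sqrt_sq hb.le]
          exact Real.sqrt_le_sqrt (by rw [hqdef]; nlinarith)
        have hSmeas : Measurable S := Finset.measurable_sum _ (fun i _ => hZm i)
        have hSb : ∀ ω, |S ω| ≤ (n:ℝ)*b := by
          intro ω
          calc |S ω| ≤ ∑ k ∈ Finset.range n, |Z k ω| := Finset.abs_sum_le_sum_abs _ _
            _ ≤ ∑ _k ∈ Finset.range n, b := Finset.sum_le_sum fun i _ => hZb i ω
            _ = (n:ℝ)*b := by simp [mul_comm]
        have hSint : ∀ j : ℕ, Integrable (fun ω => S ω ^ j) ℙ := fun j =>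
          myIntBdd (hSmeas.pow_const j) (C := ((n:ℝ)*b)^j) (fun ω => by
            rw [abs_pow]; exact pow_le_pow_left₀ (abs_nonneg _) (hSb ω) j)
        have hSabsint : ∀ j : ℕ, Integrable (fun ω => |S ω| ^ j) ℙ := fun j =>
          myIntBdd (hSmeas.abs.pow_const j) (C := ((n:ℝ)*b)^j) (fun ω => by
            rw [abs_pow, abs_abs]; exact pow_le_pow_left₀ (abs_nonneg _) (hSb ω) j)
        have hWint : ∀ k : ℕ, Integrable (fun ω => Z n ω ^ k) ℙ := fun k =>
          myIntBdd ((hZm n).pow_const k) (C := b^k) (fun ω => by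
            rw [abs_pow]; exact pow_le_pow_left₀ (abs_nonneg _) (hZb n ω) k)
        have hWabsint : ∀ k : ℕ, Integrable (fun ω => |Z n ω| ^ k) ℙ := fun k =>
          myIntBdd ((hZm n).abs.pow_const k) (C := b^k) (fun ω => by
            rw [abs_pow, abs_abs]; exact pow_le_pow_left₀ (abs_nonneg _) (hZb n ω) k)
        -- moments of the new increment
        have hW : ∀ k : ℕ, 2 ≤ k → |∫ ω, Z n ω ^ k ∂ℙ| ≤ b^(k-2) * v := by
          intro k hk
          have habs : ∀ ω, |Z n ω| ^ k ≤ b^(k-2) * (Z n ω)^2 := by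
            intro ω
            have h1 : |Z n ω| ^ k = |Z n ω|^(k-2) * |Z n ω|^2 := by
              rw [← pow_add]; congr 1; omega
            rw [h1, sq_abs]
            exact mul_le_mul_of_nonneg_right
              (pow_le_pow_left₀ (abs_nonneg _) (hZb n ω) _) (sq_nonneg _)
          calc |∫ ω, Z n ω ^ k ∂ℙ| ≤ ∫ ω, |Z n ω ^ k| ∂ℙ := myAbsInt
            _ = ∫ ω, |Z n ω| ^ k ∂ℙ := by simp only [abs_pow]
            _ ≤ ∫ ω, b^(k-2) * (Z n ω)^2 ∂ℙ :=
                integral_mono (hWabsint k) ((hWint 2).const_mul _) habs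
            _ = b^(k-2) * ∫ ω, (Z n ω)^2 ∂ℙ := integral_const_mul _ _
            _ ≤ b^(k-2) * v := mul_le_mul_of_nonneg_left (hZv n) (pow_nonneg hb.le _)
        -- absolute moments of S up to order 2m
        have hqn : (n:ℝ)*v + b^2 ≤ q := by rw [hqdef]; nlinarith
        have hSmom : ∀ j : ℕ, j ≤ 2*m → (∫ ω, |S ω| ^ j ∂ℙ) ≤ D * c^j := by
          intro j hj
          rcases Nat.even_or_odd j with he | ho
          · obtain ⟨l, rfl⟩ := he
            have hlm : l ≤ m := by omega
            have h1 : (fun ω => |S ω| ^ (l+l)) = fun ω => S ω ^ (2*l) := by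
              funext ω
              rw [show l + l = 2*l by ring]
              exact Even.pow_abs (even_two_mul l) _
            rw [h1]
            have h2 := hD Z hZm hind b v hb hv hZb hZ0 hZv l hlm n
            calc ∫ ω, S ω ^ (2*l) ∂ℙ ≤ D * ((n:ℝ)*v + b^2)^l := h2
              _ ≤ D * q^l := mul_le_mul_of_nonneg_left
                  (pow_le_pow_left₀ (hq0 n) hqn l) hDpos.le
              _ = D * c^(l+l) := by rw [show l+l = 2*l by ring, pow_mul, hc2]
          · obtain ⟨l, rfl⟩ := ho
            have hlm : l + 1 ≤ m := by omega
            have hpt : ∀ ω, 2 * c * |S ω| ^ (2*l+1) ≤ S ω ^ (2*l+2) + c^2 * S ω ^ (2*l) :=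
              fun ω => myAmgm (S ω) c l
            have hint : ∫ ω, 2*c*|S ω|^(2*l+1) ∂ℙ
                ≤ ∫ ω, (S ω^(2*l+2) + c^2 * S ω^(2*l)) ∂ℙ :=
              integral_mono ((hSabsint _).const_mul _) ((hSint _).add ((hSint _).const_mul _)) hpt
            rw [integral_const_mul, integral_add (hSint _) ((hSint _).const_mul _),
              integral_const_mul] at hint
            have h2 := hD Z hZm hind b v hb hv hZb hZ0 hZv (l+1) hlm n
            have h3 := hD Z hZm hind b v hb hv hZb hZ0 hZv l (by omega) n
            rw [show 2*(l+1) = 2*l+2 by ring] at h2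
            have e2 : ∫ ω, S ω^(2*l+2) ∂ℙ ≤ D * q^(l+1) :=
              h2.trans (mul_le_mul_of_nonneg_left (pow_le_pow_left₀ (hq0 n) hqn _) hDpos.le)
            have e3 : ∫ ω, S ω^(2*l) ∂ℙ ≤ D * q^l :=
              h3.trans (mul_le_mul_of_nonneg_left (pow_le_pow_left₀ (hq0 n) hqn _) hDpos.le)
            have e4 : c^2 * ∫ ω, S ω^(2*l) ∂ℙ ≤ q * (D * q^l) := by
              rw [hc2]
              exact mul_le_mul_of_nonneg_left e3 hqpos.le
            have e5 : D * q^(l+1) + q * (D*q^l) = 2*c*(D*c^(2*l+1)) := by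
              rw [← hc2]; ring
            have e6 : 2*c*(∫ ω, |S ω|^(2*l+1) ∂ℙ) ≤ 2*c*(D*c^(2*l+1)) := by
              calc 2*c*(∫ ω, |S ω|^(2*l+1) ∂ℙ) ≤ (∫ ω, S ω^(2*l+2) ∂ℙ) + c^2 * ∫ ω, S ω^(2*l) ∂ℙ := hint
                _ ≤ D * q^(l+1) + q * (D*q^l) := add_le_add e2 e4
                _ = 2*c*(D*c^(2*l+1)) := e5
            exact le_of_mul_le_mul_left e6 (by positivity)
        -- binomial expansion with independence
        have hSW : ∀ j k : ℕ, ∫ ω, S ω^j * Z n ω^k ∂ℙ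
            = (∫ ω, S ω^j ∂ℙ) * (∫ ω, Z n ω^k ∂ℙ) := by
          intro j k
          simp only [hS]
          exact myIndepMul Z hZm hind n j k
        have hexp : ∫ ω, (∑ k ∈ Finset.range (n+1), Z k ω)^(2*(m+1)) ∂ℙ
            = ∑ j ∈ Finset.range (2*(m+1)+1), ((2*(m+1)).choose j : ℝ) *
                ((∫ ω, S ω^j ∂ℙ) * (∫ ω, Z n ω^(2*(m+1)-j) ∂ℙ)) := by
          have h1 : (fun ω => (∑ k ∈ Finset.range (n+1), Z k ω)^(2*(m+1)))
              = fun ω => ∑ j ∈ Finset.range (2*(m+1)+1),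
                  S ω^j * Z n ω^(2*(m+1)-j) * ((2*(m+1)).choose j : ℝ) := by
            funext ω
            rw [Finset.sum_range_succ]
            rw [hS]
            exact add_pow _ _ _
          rw [h1, integral_finset_sum]
          · refine Finset.sum_congr rfl fun j _ => ?_
            rw [integral_mul_const, hSW]
            ring
          · intro j _
            exact ((myIntBdd ((hSmeas.pow_const j).mul ((hZm n).pow_const _))
              (C := ((n:ℝ)*b)^j * b^(2*(m+1)-j)) (fun ω => by
                simp only [Pi.mul_apply]
                rw [abs_mul, abs_pow, abs_pow]
                exact mul_le_mul (pow_le_pow_left₀ (abs_nonneg _) (hSb ω) j)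
                  (pow_le_pow_left₀ (abs_nonneg _) (hZb n ω) _)
                  (by positivity) (by positivity))).mul_const _)
        -- split off the top two terms
        rw [hexp, show 2*(m+1)+1 = (2*m+1)+1+1 by ring, Finset.sum_range_succ,
          Finset.sum_range_succ]
        have htop : ((2*(m+1)).choose ((2*m+1)+1) : ℝ) *
            ((∫ ω, S ω^((2*m+1)+1) ∂ℙ) * (∫ ω, Z n ω^(2*(m+1)-((2*m+1)+1)) ∂ℙ))
            = ∫ ω, S ω^(2*(m+1)) ∂ℙ := by
          rw [show 2*(m+1)-((2*m+1)+1) = 0 by omega, show (2*m+1)+1 = 2*(m+1) by ring,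
            Nat.choose_self]
          simp
        have hmid : ((2*(m+1)).choose (2*m+1) : ℝ) *
            ((∫ ω, S ω^(2*m+1) ∂ℙ) * (∫ ω, Z n ω^(2*(m+1)-(2*m+1)) ∂ℙ)) = 0 := by
          rw [show 2*(m+1)-(2*m+1) = 1 by omega]
          simp [hZ0 n]
        rw [htop, hmid]
        -- bound the remaining sum
        have hterm : ∀ j ∈ Finset.range (2*m+1),
            |((2*(m+1)).choose j : ℝ) *
              ((∫ ω, S ω^j ∂ℙ) * (∫ ω, Z n ω^(2*(m+1)-j) ∂ℙ))|
            ≤ ((2*(m+1)).choose j : ℝ) * (D*v*q^m) := by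
          intro j hj
          have hj' : j ≤ 2*m := by simpa [Nat.lt_succ_iff] using hj
          have hCS : |∫ ω, S ω^j ∂ℙ| ≤ D * c^j := by
            calc |∫ ω, S ω^j ∂ℙ| ≤ ∫ ω, |S ω^j| ∂ℙ := myAbsInt
              _ = ∫ ω, |S ω|^j ∂ℙ := by simp only [abs_pow]
              _ ≤ D * c^j := hSmom j hj'
          have hCW : |∫ ω, Z n ω^(2*(m+1)-j) ∂ℙ| ≤ b^(2*(m+1)-j-2) * v := hW _ (by omega)
          have hk : j + (2*(m+1) - j - 2) = 2*m := by omega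
          calc |((2*(m+1)).choose j : ℝ) *
              ((∫ ω, S ω^j ∂ℙ) * (∫ ω, Z n ω^(2*(m+1)-j) ∂ℙ))|
              = ((2*(m+1)).choose j : ℝ) *
                (|∫ ω, S ω^j ∂ℙ| * |∫ ω, Z n ω^(2*(m+1)-j) ∂ℙ|) := by
                rw [abs_mul, abs_mul, Nat.abs_cast]
            _ ≤ ((2*(m+1)).choose j : ℝ) * ((D * c^j) * (b^(2*(m+1)-j-2) * v)) := by
                refine mul_le_mul_of_nonneg_left ?_ (Nat.cast_nonneg _)
                exact mul_le_mul hCS hCW (abs_nonneg _) (by positivity)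
            _ ≤ ((2*(m+1)).choose j : ℝ) * ((D * c^j) * (c^(2*(m+1)-j-2) * v)) := by
                have hbcpow : b^(2*(m+1)-j-2) ≤ c^(2*(m+1)-j-2) := pow_le_pow_left₀ hb.le hbc _
                refine mul_le_mul_of_nonneg_left ?_ (Nat.cast_nonneg _)
                refine mul_le_mul_of_nonneg_left ?_ (by positivity)
                exact mul_le_mul_of_nonneg_right hbcpow hv
            _ = ((2*(m+1)).choose j : ℝ) * (D*v*(c^j * c^(2*(m+1)-j-2))) := by ring
            _ = ((2*(m+1)).choose j : ℝ) * (D*v*q^m) := by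
                rw [← pow_add, hk, pow_mul, hc2]
        have hchoose : (∑ j ∈ Finset.range (2*m+1), ((2*(m+1)).choose j : ℝ))
            ≤ 2^(2*(m+1)) := by
          have h1 : (∑ j ∈ Finset.range (2*m+1), (2*(m+1)).choose j) ≤ 2^(2*(m+1)) := by
            rw [← Nat.sum_range_choose]
            exact Finset.sum_le_sum_of_subset (Finset.range_subset_range.mpr (by omega))
          exact_mod_cast h1
        have hsum : (∑ j ∈ Finset.range (2*m+1), ((2*(m+1)).choose j : ℝ) *
              ((∫ ω, S ω^j ∂ℙ) * (∫ ω, Z n ω^(2*(m+1)-j) ∂ℙ)))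
            ≤ 4^(m+1) * D * v * q^m := by
          calc (∑ j ∈ Finset.range (2*m+1), ((2*(m+1)).choose j : ℝ) *
              ((∫ ω, S ω^j ∂ℙ) * (∫ ω, Z n ω^(2*(m+1)-j) ∂ℙ)))
              ≤ ∑ j ∈ Finset.range (2*m+1), |((2*(m+1)).choose j : ℝ) *
                ((∫ ω, S ω^j ∂ℙ) * (∫ ω, Z n ω^(2*(m+1)-j) ∂ℙ))| :=
                Finset.sum_le_sum fun j _ => le_abs_self _
            _ ≤ ∑ j ∈ Finset.range (2*m+1), ((2*(m+1)).choose j : ℝ) * (D*v*q^m) :=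
                Finset.sum_le_sum hterm
            _ = (∑ j ∈ Finset.range (2*m+1), ((2*(m+1)).choose j : ℝ)) * (D*v*q^m) :=
                (Finset.sum_mul _ _ _).symm
            _ ≤ (2:ℝ)^(2*(m+1)) * (D*v*q^m) :=
                mul_le_mul_of_nonneg_right hchoose (by positivity)
            _ = 4^(m+1) * D * v * q^m := by
                rw [pow_mul]; norm_num; ring
        linarith
      -- inner induction on n
      have main : ∀ n : ℕ,
          ∫ ω, (∑ k ∈ Finset.range n, Z k ω) ^ (2*(m+1)) ∂ℙ ≤
            4^(m+1) * D * ((n:ℝ) * v) * ((n:ℝ)*v + b^2) ^ m := by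
        intro n
        induction n with
        | zero => simp
        | succ n ih =>
          have hstep := key n
          have hA : (0:ℝ) ≤ 4^(m+1) * D := by positivity
          have hmono : ((n:ℝ)*v + b^2)^m ≤ (((n:ℝ)+1)*v + b^2)^m :=
            pow_le_pow_left₀ (hq0 n) (by nlinarith) m
          have e1 : 4^(m+1) * D * ((n:ℝ)*v) * ((n:ℝ)*v + b^2)^m ≤
              4^(m+1) * D * ((n:ℝ)*v) * (((n:ℝ)+1)*v + b^2)^m :=
            mul_le_mul_of_nonneg_left hmono (by positivity)
          have e2 : 4^(m+1) * D * ((n:ℝ)*v) * (((n:ℝ)+1)*v + b^2)^m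
              + 4^(m+1) * D * v * (((n:ℝ)+1)*v + b^2)^m
              = 4^(m+1) * D * (((n:ℝ)+1)*v) * (((n:ℝ)+1)*v + b^2)^m := by ring
          push_cast
          linarith
      have h := main n
      have hnvq : (n:ℝ)*v ≤ (n:ℝ)*v + b^2 := by nlinarith
      have hq0' := hq0 n
      have h5 : 4^(m+1) * D * ((n:ℝ)*v) * ((n:ℝ)*v + b^2)^m
          ≤ 4^(m+1) * D * ((n:ℝ)*v + b^2) * ((n:ℝ)*v + b^2)^m :=
        mul_le_mul_of_nonneg_right
          (mul_le_mul_of_nonneg_left hnvq (by positivity)) (pow_nonneg hq0' m)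
      have h6 : 4^(m+1) * D * ((n:ℝ)*v + b^2) * ((n:ℝ)*v + b^2)^m
          = 4^(m+1) * D * ((n:ℝ)*v + b^2)^(m+1) := by ring
      linarith

lemma myMarkov {S : Ω → ℝ} (hS : Measurable S) {C : ℝ} (hC : ∀ ω, |S ω| ≤ C)
    (m : ℕ) {K : ℝ} {n : ℕ} (hn : 1 ≤ n)
    (hmom : ∫ ω, (S ω)^(2*m) ∂ℙ ≤ K * (n:ℝ) ^ ((8:ℝ)*m/5)) :
    (ℙ {ω | (n:ℝ)/16 < |S ω|}).toReal ≤ 16^(2*m) * K * (n:ℝ) ^ ((8:ℝ)*m/5 - 2*m) := by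
  have hn0 : (0:ℝ) < n := by exact_mod_cast hn
  have hpe : (0:ℝ) < ((n:ℝ)/16)^(2*m) := by positivity
  have hsub : {ω | (n:ℝ)/16 < |S ω|} ⊆ {ω | ((n:ℝ)/16)^(2*m) ≤ (S ω)^(2*m)} := by
    intro ω hω
    have h1 : ((n:ℝ)/16)^(2*m) ≤ |S ω|^(2*m) :=
      pow_le_pow_left₀ (by positivity) (le_of_lt hω) _
    rwa [Even.pow_abs (even_two_mul m)] at h1
  have hint : Integrable (fun ω => (S ω)^(2*m)) ℙ :=
    myIntBdd (hS.pow_const _) (C := |C|^(2*m)) (fun ω => by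
      rw [abs_pow]
      exact pow_le_pow_left₀ (abs_nonneg _) ((hC ω).trans (le_abs_self C)) _)
  have hmarkov := mul_meas_ge_le_integral_of_nonneg
      (ae_of_all _ fun ω => (even_two_mul m).pow_nonneg (S ω)) hint (((n:ℝ)/16)^(2*m))
  have hP : (ℙ {ω | (n:ℝ)/16 < |S ω|}).toReal
      ≤ (ℙ {ω | ((n:ℝ)/16)^(2*m) ≤ (S ω)^(2*m)}).toReal :=
    ENNReal.toReal_mono (measure_ne_top _ _) (measure_mono hsub)
  have h2 : ((n:ℝ)/16)^(2*m) * (ℙ {ω | (n:ℝ)/16 < |S ω|}).toReal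
      ≤ K * (n:ℝ)^((8:ℝ)*m/5) := by
    calc ((n:ℝ)/16)^(2*m) * (ℙ {ω | (n:ℝ)/16 < |S ω|}).toReal
        ≤ ((n:ℝ)/16)^(2*m) * (ℙ {ω | ((n:ℝ)/16)^(2*m) ≤ (S ω)^(2*m)}).toReal :=
          mul_le_mul_of_nonneg_left hP hpe.le
      _ ≤ ∫ ω, (S ω)^(2*m) ∂ℙ := hmarkov
      _ ≤ K * (n:ℝ)^((8:ℝ)*m/5) := hmom
  have h3 : (ℙ {ω | (n:ℝ)/16 < |S ω|}).toReal
      ≤ (K * (n:ℝ)^((8:ℝ)*m/5)) / (((n:ℝ)/16)^(2*m)) :=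
    (le_div_iff₀ hpe).mpr (by linarith)
  refine h3.trans (le_of_eq ?_)
  have hpow : (n:ℝ) ^ ((2:ℝ)*(m:ℝ)) = (n:ℝ)^(2*m : ℕ) := by
    rw [show ((2:ℝ)*(m:ℝ)) = ((2*m : ℕ):ℝ) by push_cast; ring, Real.rpow_natCast]
  rw [Real.rpow_sub hn0, hpow, div_pow]
  have h16 : ((16:ℝ))^(2*m) ≠ 0 := by positivity
  have hnp : ((n:ℝ))^(2*m) ≠ 0 := by positivity
  field_simp

end Aux

/-- Moment bound for centered truncated sums: for i.i.d. `X` with finite `2r`-th moment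
and `Y n k` the truncation of `X k` at level `n^{4/5}` recentered at its mean, there is
a constant `K'` (independent of `n`) with `E[(Y 1 + … + Y n)^{2r}] ≤ K' nʳ n^{4r/5}`;
hence `P(|Y 1 + … + Y n| > n/16) ≤ 16^{2r} K' n^{9r/5 - 2r}`, which is summable against
`n^{r-1}` for `r ≥ 2`. -/
theorem stmt19 {Ω : Type*} [MeasureSpace Ω] [IsProbabilityMeasure (ℙ : Measure Ω)]
    (X : ℕ → Ω → ℝ) (hmeas : ∀ i, Measurable (X i))
    (hindep : iIndepFun X ℙ)
    (hident : ∀ i, IdentDistrib (X i) (X 0) ℙ ℙ)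
    (μ : ℝ) (hmean : ∫ ω, X 0 ω ∂ℙ = μ)
    (r : ℕ) (hr : 2 ≤ r)
    (hmom : Integrable (fun ω => (X 0 ω) ^ (2 * r)) ℙ)
    (Y : ℕ → ℕ → Ω → ℝ)
    (hY : ∀ n k ω, Y n k ω =
      (if |X k ω| ≤ (n : ℝ) ^ ((4 : ℝ) / 5) then X k ω else 0) -
        ∫ ω', (if |X k ω'| ≤ (n : ℝ) ^ ((4 : ℝ) / 5) then X k ω' else 0) ∂ℙ) :
    ∃ K' : ℝ, 0 ≤ K' ∧
      (∀ n : ℕ, 1 ≤ n →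
        ∫ ω, (∑ k ∈ Finset.range n, Y n k ω) ^ (2 * r) ∂ℙ ≤
          K' * (n : ℝ) ^ (r : ℕ) * (n : ℝ) ^ ((4 : ℝ) * r / 5)) ∧
      (∀ n : ℕ, 1 ≤ n →
        ℙ {ω | (n : ℝ) / 16 < |∑ k ∈ Finset.range n, Y n k ω|} ≤
          ENNReal.ofReal ((16 : ℝ) ^ (2 * r) * K' *
            (n : ℝ) ^ ((9 : ℝ) * r / 5 - 2 * r))) ∧
      Summable (fun n : ℕ => (n : ℝ) ^ (r - 1) *
        (ℙ {ω | (n : ℝ) / 16 < |∑ k ∈ Finset.range n, Y n k ω|}).toReal) := by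
  classical
  -- second moment of X 0
  have hX2int : Integrable (fun ω => (X 0 ω)^2) ℙ := by
    refine Integrable.mono' ((integrable_const (1:ℝ)).add hmom)
      ((hmeas 0).pow_const 2).aestronglyMeasurable (ae_of_all _ fun ω => ?_)
    rw [Real.norm_eq_abs, abs_of_nonneg (sq_nonneg _)]
    rcases le_or_gt |X 0 ω| 1 with h | h
    · have h1 : (X 0 ω)^2 ≤ 1 := by
        have h2 := pow_le_pow_left₀ (abs_nonneg _) h 2
        rwa [sq_abs, one_pow] at h2
      have h2 : (0:ℝ) ≤ (X 0 ω)^(2*r) := (even_two_mul r).pow_nonneg _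
      simp only [Pi.add_apply]
      linarith
    · have h1 : |X 0 ω|^2 ≤ |X 0 ω|^(2*r) :=
        pow_le_pow_right₀ h.le (by omega)
      rw [sq_abs, Even.pow_abs (even_two_mul r)] at h1
      simp only [Pi.add_apply]
      linarith
  set v : ℝ := ∫ ω, (X 0 ω)^2 ∂ℙ with hvdef
  have hv : 0 ≤ v := integral_nonneg fun ω => sq_nonneg _
  have hXk2int : ∀ k, Integrable (fun ω => (X k ω)^2) ℙ := fun k =>
    (((hident k).comp (measurable_id.pow_const 2)).integrable_iff).mpr hX2int
  have hXk2eq : ∀ k, ∫ ω, (X k ω)^2 ∂ℙ = v := fun k =>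
    ((hident k).comp (measurable_id.pow_const 2)).integral_eq
  -- properties of the truncated-centered variables
  have hprop : ∀ n : ℕ, 1 ≤ n →
      (∀ i, Measurable (Y n i)) ∧
      iIndepFun (Y n) ℙ ∧
      (∀ i ω, |Y n i ω| ≤ 2*(n:ℝ)^((4:ℝ)/5)) ∧
      (∀ i, ∫ ω, Y n i ω ∂ℙ = 0) ∧
      (∀ i, ∫ ω, (Y n i ω)^2 ∂ℙ ≤ v) := by
    intro n hn
    have hn1 : (1:ℝ) ≤ (n:ℝ) := by exact_mod_cast hn
    set c : ℝ := (n:ℝ)^((4:ℝ)/5) with hcdef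
    have hc1 : (1:ℝ) ≤ c := by
      rw [hcdef, show (1:ℝ) = (n:ℝ)^((0:ℝ)) from (Real.rpow_zero _).symm]
      exact Real.rpow_le_rpow_of_exponent_le hn1 (by norm_num)
    have hc0 : (0:ℝ) ≤ c := le_trans zero_le_one hc1
    set T : ℕ → Ω → ℝ := fun k ω => if |X k ω| ≤ c then X k ω else 0 with hTdef
    have hTmeas : ∀ k, Measurable (T k) := fun k =>
      Measurable.ite (measurableSet_le (hmeas k).abs measurable_const)
        (hmeas k) measurable_const
    have hTb : ∀ k ω, |T k ω| ≤ c := by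
      intro k ω
      rw [hTdef]
      dsimp only
      split_ifs with h
      · exact h
      · simpa using hc0
    have hTint : ∀ k, Integrable (T k) ℙ := fun k => myIntBdd (hTmeas k) (hTb k)
    have hTm : ∀ k, |∫ ω, T k ω ∂ℙ| ≤ c := by
      intro k
      calc |∫ ω, T k ω ∂ℙ| ≤ ∫ ω, |T k ω| ∂ℙ := myAbsInt
        _ ≤ ∫ _ω, c ∂ℙ := integral_mono (hTint k).abs (integrable_const c) (hTb k)
        _ = c := by simp
    have hYeq : ∀ k, Y n k = fun ω => T k ω - ∫ ω', T k ω' ∂ℙ := by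
      intro k; funext ω; rw [hY n k ω]
    have hYmeas : ∀ k, Measurable (Y n k) := by
      intro k; rw [hYeq k]; exact (hTmeas k).sub measurable_const
    have hYb : ∀ k ω, |Y n k ω| ≤ 2*c := by
      intro k ω
      rw [hYeq k]
      calc |T k ω - ∫ ω', T k ω' ∂ℙ| ≤ |T k ω| + |∫ ω', T k ω' ∂ℙ| := abs_sub _ _
        _ ≤ c + c := add_le_add (hTb k ω) (hTm k)
        _ = 2*c := by ring
    have hY0 : ∀ k, ∫ ω, Y n k ω ∂ℙ = 0 := by
      intro k
      rw [hYeq k, integral_sub (hTint k) (integrable_const _)]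
      simp
    have hYv : ∀ k, ∫ ω, (Y n k ω)^2 ∂ℙ ≤ v := by
      intro k
      set d : ℝ := ∫ ω', T k ω' ∂ℙ with hddef
      have hT2int : Integrable (fun ω => (T k ω)^2) ℙ :=
        myIntBdd ((hTmeas k).pow_const 2) (C := c^2) (fun ω => by
          rw [abs_pow]; exact pow_le_pow_left₀ (abs_nonneg _) (hTb k ω) 2)
      have hfun : (fun ω => (Y n k ω)^2)
          = fun ω => ((T k ω)^2 - (2*d)*(T k ω)) + d^2 := by
        funext ω; rw [hYeq k]; dsimp only; ring
      have hsubint : Integrable (fun ω => (T k ω)^2 - (2*d)*(T k ω)) ℙ :=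
        hT2int.sub ((hTint k).const_mul (2*d))
      have hint1 : ∫ ω, (Y n k ω)^2 ∂ℙ = (∫ ω, (T k ω)^2 ∂ℙ) - 2*d*d + d^2 := by
        rw [hfun, integral_add hsubint (integrable_const _),
          integral_sub hT2int ((hTint k).const_mul (2*d)), integral_const_mul]
        simp [hddef]
      have hT2le : ∫ ω, (T k ω)^2 ∂ℙ ≤ v := by
        rw [← hXk2eq k]
        refine integral_mono hT2int (hXk2int k) (fun ω => ?_)
        rw [hTdef]
        dsimp only
        split_ifs with h
        · exact le_refl _
        · simpa using sq_nonneg (X k ω)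
      have := sq_nonneg d
      rw [hint1]
      nlinarith
    have hYindep : iIndepFun (Y n) ℙ := by
      set g : ℕ → ℝ → ℝ := fun k x => (if |x| ≤ c then x else 0) - ∫ ω', T k ω' ∂ℙ
        with hgdef
      have hg : ∀ k, Measurable (g k) := fun k =>
        ((Measurable.ite (measurableSet_le measurable_abs measurable_const)
          measurable_id measurable_const).sub measurable_const)
      have h1 := hindep.comp g hg
      have heq : (fun i => g i ∘ X i) = Y n := by
        funext k ω
        rw [hgdef]
        simp only [Function.comp_apply]
        rw [hY n k ω]
      rwa [heq] at h1
    exact ⟨hYmeas, hYindep, fun i ω => hYb i ω, hY0, hYv⟩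
  -- generic moment bound for the sums
  have hbound : ∀ (m : ℕ) (D : ℝ), 1 ≤ D →
      (∀ (Z : ℕ → Ω → ℝ), (∀ i, Measurable (Z i)) →
        iIndepFun Z ℙ → ∀ (b v' : ℝ), 0 < b → 0 ≤ v' →
        (∀ i ω, |Z i ω| ≤ b) → (∀ i, ∫ ω, Z i ω ∂ℙ = 0) →
        (∀ i, ∫ ω, (Z i ω)^2 ∂ℙ ≤ v') →
        ∀ l, l ≤ m → ∀ n : ℕ,
          ∫ ω, (∑ k ∈ Finset.range n, Z k ω) ^ (2*l) ∂ℙ ≤ D * ((n:ℝ) * v' + b^2) ^ l) →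
      ∀ n : ℕ, 1 ≤ n → ∫ ω, (∑ k ∈ Finset.range n, Y n k ω)^(2*m) ∂ℙ ≤
        (D * (v+4)^m) * (n:ℝ)^((8:ℝ)*m/5) := by
    intro m D hD1 hD n hn
    have hn1 : (1:ℝ) ≤ (n:ℝ) := by exact_mod_cast hn
    have hn0 : (0:ℝ) < (n:ℝ) := lt_of_lt_of_le one_pos hn1
    obtain ⟨hYm, hYi, hYb, hY0, hYv⟩ := hprop n hn
    have hb0 : (0:ℝ) < 2*(n:ℝ)^((4:ℝ)/5) := by
      have := Real.rpow_pos_of_pos hn0 ((4:ℝ)/5)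
      linarith
    have h := hD (Y n) hYm hYi _ v hb0 hv hYb hY0 hYv m le_rfl n
    have h85 : (n:ℝ) ≤ (n:ℝ)^((8:ℝ)/5) := by
      calc (n:ℝ) = (n:ℝ)^((1:ℝ)) := (Real.rpow_one _).symm
        _ ≤ (n:ℝ)^((8:ℝ)/5) := Real.rpow_le_rpow_of_exponent_le hn1 (by norm_num)
    have hsq : (2*(n:ℝ)^((4:ℝ)/5))^2 = 4 * (n:ℝ)^((8:ℝ)/5) := by
      have h2 : ((n:ℝ)^((4:ℝ)/5))^(2:ℕ) = (n:ℝ)^((8:ℝ)/5) := by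
        rw [← Real.rpow_natCast ((n:ℝ)^((4:ℝ)/5)) 2,
          ← Real.rpow_mul (Nat.cast_nonneg n)]
        norm_num
      rw [mul_pow, h2]; norm_num
    have hqle : (n:ℝ)*v + (2*(n:ℝ)^((4:ℝ)/5))^2 ≤ (v+4) * (n:ℝ)^((8:ℝ)/5) := by
      rw [hsq]
      have h3 : (n:ℝ)*v ≤ (n:ℝ)^((8:ℝ)/5)*v := mul_le_mul_of_nonneg_right h85 hv
      nlinarith
    have hq0 : (0:ℝ) ≤ (n:ℝ)*v + (2*(n:ℝ)^((4:ℝ)/5))^2 := by positivity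
    calc ∫ ω, (∑ k ∈ Finset.range n, Y n k ω)^(2*m) ∂ℙ
        ≤ D * ((n:ℝ)*v + (2*(n:ℝ)^((4:ℝ)/5))^2)^m := h
      _ ≤ D * ((v+4) * (n:ℝ)^((8:ℝ)/5))^m :=
          mul_le_mul_of_nonneg_left (pow_le_pow_left₀ hq0 hqle m) (by linarith)
      _ = (D * (v+4)^m) * (n:ℝ)^((8:ℝ)*m/5) := by
          rw [mul_pow, ← Real.rpow_natCast ((n:ℝ)^((8:ℝ)/5)) m,
            ← Real.rpow_mul (Nat.cast_nonneg n),
            show (8:ℝ)/5*(m:ℕ) = (8:ℝ)*m/5 by push_cast; ring]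
          ring
  obtain ⟨D1, hD11, hD1⟩ := moment_key (Ω := Ω) r
  obtain ⟨D2, hD21, hD2⟩ := moment_key (Ω := Ω) (3*r)
  set K' : ℝ := D1 * (v+4)^r with hK'def
  have hK'0 : 0 ≤ K' := by
    rw [hK'def]; positivity
  have hmomr := hbound r D1 hD11 hD1
  have hmom3r := hbound (3*r) D2 hD21 hD2
  -- helpers for probability bounds
  have hSmeas : ∀ n : ℕ, Measurable (fun ω => ∑ k ∈ Finset.range n, Y n k ω) := by
    intro n
    rcases Nat.eq_zero_or_pos n with rfl | hn
    · simpa using measurable_const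
    · obtain ⟨hYm, _, _, _, _⟩ := hprop n hn
      exact Finset.measurable_sum _ (fun i _ => hYm i)
  have hSbd : ∀ n : ℕ, 1 ≤ n → ∀ ω,
      |∑ k ∈ Finset.range n, Y n k ω| ≤ (n:ℝ) * (2*(n:ℝ)^((4:ℝ)/5)) := by
    intro n hn ω
    obtain ⟨_, _, hYb, _, _⟩ := hprop n hn
    calc |∑ k ∈ Finset.range n, Y n k ω| ≤ ∑ k ∈ Finset.range n, |Y n k ω| :=
        Finset.abs_sum_le_sum_abs _ _
      _ ≤ ∑ _k ∈ Finset.range n, 2*(n:ℝ)^((4:ℝ)/5) :=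
        Finset.sum_le_sum fun i _ => hYb i ω
      _ = (n:ℝ) * (2*(n:ℝ)^((4:ℝ)/5)) := by simp [mul_comm]
  refine ⟨K', hK'0, ?_, ?_, ?_⟩
  · -- claim 1
    intro n hn
    have hn1 : (1:ℝ) ≤ (n:ℝ) := by exact_mod_cast hn
    have hn0 : (0:ℝ) < (n:ℝ) := lt_of_lt_of_le one_pos hn1
    have h := hmomr n hn
    have hexp : (n:ℝ)^(r:ℕ) * (n:ℝ)^((4:ℝ)*r/5) = (n:ℝ)^((r:ℝ) + 4*r/5) := by
      rw [← Real.rpow_natCast (n:ℝ) r, ← Real.rpow_add hn0]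
    have hle : (n:ℝ)^((8:ℝ)*r/5) ≤ (n:ℝ)^((r:ℝ) + 4*r/5) :=
      Real.rpow_le_rpow_of_exponent_le hn1 (by
        have : (0:ℝ) ≤ (r:ℝ) := Nat.cast_nonneg r
        linarith)
    calc ∫ ω, (∑ k ∈ Finset.range n, Y n k ω)^(2*r) ∂ℙ
        ≤ K' * (n:ℝ)^((8:ℝ)*r/5) := h
      _ ≤ K' * (n:ℝ)^((r:ℝ) + 4*r/5) := mul_le_mul_of_nonneg_left hle hK'0
      _ = K' * ((n:ℝ)^(r:ℕ) * (n:ℝ)^((4:ℝ)*r/5)) := by rw [hexp]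
      _ = K' * (n:ℝ)^(r:ℕ) * (n:ℝ)^((4:ℝ)*r/5) := (mul_assoc _ _ _).symm
  · -- claim 2
    intro n hn
    have hn1 : (1:ℝ) ≤ (n:ℝ) := by exact_mod_cast hn
    have hn0 : (0:ℝ) < (n:ℝ) := lt_of_lt_of_le one_pos hn1
    have ht := myMarkov (hSmeas n) (hSbd n hn) r hn (hmomr n hn)
    have hle : (16:ℝ)^(2*r) * K' * (n:ℝ)^((8:ℝ)*r/5 - 2*r)
        ≤ (16:ℝ)^(2*r) * K' * (n:ℝ)^((9:ℝ)*r/5 - 2*r) := by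
      refine mul_le_mul_of_nonneg_left ?_ (by positivity)
      refine Real.rpow_le_rpow_of_exponent_le hn1 (by
        have : (0:ℝ) ≤ (r:ℝ) := Nat.cast_nonneg r
        linarith)
    rw [← ENNReal.ofReal_toReal (measure_ne_top ℙ _)]
    exact ENNReal.ofReal_le_ofReal (le_trans ht hle)
  · -- claim 3 : summability
    set K3 : ℝ := D2 * (v+4)^(3*r) with hK3def
    have hK30 : 0 ≤ K3 := by rw [hK3def]; positivity
    set Cc : ℝ := (16:ℝ)^(2*(3*r)) * K3 with hCcdef
    have hCc0 : 0 ≤ Cc := by rw [hCcdef]; positivity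
    set e : ℝ := -(r:ℝ)/5 - 1 with hedef
    have hrR : (2:ℝ) ≤ (r:ℝ) := by exact_mod_cast hr
    have he : e < -1 := by rw [hedef]; linarith
    have hsummable : Summable (fun n : ℕ => Cc * (n:ℝ)^e) :=
      (Real.summable_nat_rpow.mpr he).mul_left Cc
    refine Summable.of_nonneg_of_le (fun n => ?_) (fun n => ?_) hsummable
    · exact mul_nonneg (pow_nonneg (Nat.cast_nonneg n) _) ENNReal.toReal_nonneg
    · rcases Nat.eq_zero_or_pos n with rfl | hn
      · have h0 : ((0:ℕ):ℝ)^(r-1) = 0 := by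
          rw [Nat.cast_zero]
          exact zero_pow (by omega)
        rw [h0, zero_mul]
        positivity
      · have hn1 : (1:ℝ) ≤ (n:ℝ) := by exact_mod_cast hn
        have hn0 : (0:ℝ) < (n:ℝ) := lt_of_lt_of_le one_pos hn1
        have ht := myMarkov (hSmeas n) (hSbd n hn) (3*r) hn (hmom3r n hn)
        push_cast at ht
        have hcast : ((n:ℝ))^(r-1 : ℕ) = (n:ℝ)^((r:ℝ)-1) := by
          rw [← Real.rpow_natCast (n:ℝ) (r-1)]
          congr 1
          have : ((r-1 : ℕ):ℝ) = (r:ℝ) - 1 := by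
            have h1 : 1 ≤ r := by omega
            push_cast [h1]
            ring
          rw [this]
        calc (n:ℝ)^(r-1 : ℕ) *
            (ℙ {ω | (n:ℝ)/16 < |∑ k ∈ Finset.range n, Y n k ω|}).toReal
            ≤ (n:ℝ)^(r-1 : ℕ) *
              ((16:ℝ)^(2*(3*r)) * K3 * (n:ℝ)^((8:ℝ)*(3*r)/5 - 2*(3*r))) :=
            mul_le_mul_of_nonneg_left ht (pow_nonneg (Nat.cast_nonneg n) _)
          _ = Cc * ((n:ℝ)^((r:ℝ)-1) * (n:ℝ)^((8:ℝ)*(3*r)/5 - 2*(3*r))) := by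
            rw [hcast, hCcdef]; ring
          _ = Cc * (n:ℝ)^e := by
            rw [← Real.rpow_add hn0]
            congr 1
            rw [hedef]
            push_cast
            ring
end
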